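/- arXiv:2010.13176 — 2 statements merged into one kernel-verified Lean document; each statement's English description precedes it below -/
import Mathlib

section
/- Let (H,<) be a left-ordered group and let z ∈ H be a central element with id < z that is cofinal. For each n ≥ 1, every h ∈ H has a unique coset representative [h]_n ∈ h⟨zⁿ⟩ with id ≤ [h]_n < zⁿ, and the quotient H/⟨zⁿ⟩ carries the circular ordering cₙ given, for pairwise distinct cosets, by cₙ(g₁⟨zⁿ⟩, g₂⟨zⁿ⟩, g₃⟨zⁿ⟩) = sign(σ) where σ is the unique permutation of {1,2,3} with [g_{σ(1)}]_n < [g_{σ(2)}]_n < [g_{σ(3)}]_n. Let dₙ ∈ CO(H) be the lexicographic circular ordering of H built from the short exact sequence 1 → ⟨zⁿ⟩ → H → H/⟨zⁿ⟩ → 1, using cₙ on the quotient and the left-ordering of ⟨zⁿ⟩ in which zⁿ > id on the kernel (i.e. dₙ = φ_<(cₙ) with the lexicographic extension formula). Then the sequence (dₙ)_{n≥1} converges in CO(H) to the secret left-ordering c_<. -/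
namespace Paper

variable {G : Type*} [Group G]

/-- A left-invariant circular ordering of a group `G`, as a function `G³ → {0, ±1} ⊆ ℤ`. -/
def IsCircOrd (c : G → G → G → ℤ) : Prop :=
  (∀ g₁ g₂ g₃ : G, c g₁ g₂ g₃ = 0 ↔ (g₁ = g₂ ∨ g₁ = g₃ ∨ g₂ = g₃)) ∧
  (∀ g₁ g₂ g₃ : G, c g₁ g₂ g₃ = 0 ∨ c g₁ g₂ g₃ = 1 ∨ c g₁ g₂ g₃ = -1) ∧
  (∀ g₁ g₂ g₃ g₄ : G, c g₂ g₃ g₄ - c g₁ g₃ g₄ + c g₁ g₂ g₄ - c g₁ g₂ g₃ = 0) ∧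
  (∀ g g₁ g₂ g₃ : G, c (g*g₁) (g*g₂) (g*g₃) = c g₁ g₂ g₃)

/-- The space CO(G) of circular orderings, topologized as a subspace of `ℤ^{G³}`
(all relevant values lie in the discrete set `{0,±1}`, and `ℤ` carries the discrete
topology, so this is the subspace topology from the product topology on `{0,±1}^{G³}`). -/
abbrev CircOrd (G : Type*) [Group G] := {c : G → G → G → ℤ // IsCircOrd c}

open Classical in
/-- The cocycle `f_c`: `f_c(g,h) = 0` if `g = 1` or `h = 1` or `c(1,g,gh) = 1`,
and `f_c(g,h) = 1` otherwise (i.e. when `gh = 1 ≠ g`, or `c(1,gh,g) = 1`). -/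
noncomputable def fc (c : G → G → G → ℤ) (g h : G) : ℤ :=
  if g = 1 ∨ h = 1 ∨ c 1 g (g*h) = 1 then 0 else 1

/-- Multiplication in the central extension `G̃_c = G × ℤ`:
`(g,n)(h,m) = (gh, n+m+f_c(g,h))`. -/
noncomputable def liftMul (c : G → G → G → ℤ) (x y : G × ℤ) : G × ℤ :=
  (x.1 * y.1, x.2 + y.2 + fc c x.1 y.1)

/-- Powers (with natural number exponents) in `G̃_c`. -/
noncomputable def liftPow (c : G → G → G → ℤ) (x : G × ℤ) : ℕ → G × ℤ
  | 0 => (1, 0)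
  | n+1 => liftMul c (liftPow c x n) x

/-- `[h]_c`: the unique integer `k` with `z_c^k ≤_c h <_c z_c^{k+1}`, where `<_c` is the
left-ordering of `G̃_c` with positive cone `{(g,n) : n ≥ 0} ∖ {(1,0)}` and `z_c = (1,1)`.
Since `z_c^k = (1,k)` and `f_c(g,g⁻¹) = 1` for `g ≠ 1`, this is exactly the second
coordinate of `h`. -/
def liftFloor (h : G × ℤ) : ℤ := h.2

/-- The translation number `r̃ot_c(h)` of `h ∈ G̃_c`: the limit of `[hⁿ]_c / n`
(`limUnder` picks out the limit when it exists). -/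
noncomputable def rotTilde (c : G → G → G → ℤ) (h : G × ℤ) : ℝ :=
  Filter.limUnder Filter.atTop (fun n : ℕ => (liftFloor (liftPow c h n) : ℝ) / (n : ℝ))

/-- The rotation number `rot_c(g) ∈ ℝ/ℤ`, computed using the lift `(g,0) ∈ G̃_c`
(it is independent of the choice of lift). -/
noncomputable def rotc (c : G → G → G → ℤ) (g : G) : AddCircle (1:ℝ) :=
  ((rotTilde c (g, 0) : ℝ) : AddCircle (1:ℝ))

/-- `τ_c(g,h) = r̃ot_c(g̃h̃) − r̃ot_c(g̃) − r̃ot_c(h̃)`, computed using the lifts `(g,0)`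
and `(h,0)` (it is independent of the choice of lifts). -/
noncomputable def tauc (c : G → G → G → ℤ) (g h : G) : ℝ :=
  rotTilde c (liftMul c (g,0) (h,0)) - rotTilde c (g,0) - rotTilde c (h,0)

/-- A positive cone of a group `G`: `P · P ⊆ P` and `P ∪ P⁻¹ = G ∖ {1}`.
It determines a left-ordering by `g < h` iff `g⁻¹h ∈ P`. -/
def IsPositiveCone (P : Set G) : Prop :=
  (∀ a ∈ P, ∀ b ∈ P, a * b ∈ P) ∧ (P ∪ P⁻¹ = {g : G | g ≠ 1})

/-- The left-ordering determined by a positive cone. -/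
def coneLt (P : Set G) (a b : G) : Prop := a⁻¹ * b ∈ P

open Classical in
/-- The secret left-ordering `c_<` determined by a positive cone `P`:
`c_<(a,b,c) = sign σ` where `σ` is the permutation sorting `(a,b,c)` into increasing
order, i.e. `c_< = 1` on positively cyclically ordered triples, `-1` on negatively
cyclically ordered triples, and `0` when the entries are not all distinct. -/
noncomputable def circOfCone (P : Set G) : G → G → G → ℤ := fun a b c =>
  if (coneLt P a b ∧ coneLt P b c) ∨ (coneLt P b c ∧ coneLt P c a) ∨
      (coneLt P c a ∧ coneLt P a b) then 1
  else if (coneLt P c b ∧ coneLt P b a) ∨ (coneLt P b a ∧ coneLt P a c) ∨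
      (coneLt P a c ∧ coneLt P c b) then -1
  else 0

/-- A circular ordering is a *secret left-ordering* if it is `c_<` for some
left-ordering `<` of `G`. -/
def IsSecret (c : G → G → G → ℤ) : Prop := ∃ P : Set G, IsPositiveCone P ∧ c = circOfCone P

/-- The positive cone of the left-ordering of the kernel `⟨zⁿ⟩` in which `zⁿ > 1`. -/
def kerCone (z : G) (n : ℕ) : Set G := {x : G | ∃ k : ℤ, 0 < k ∧ x = (z ^ n) ^ k}

/-- `a` and `b` lie in the same left coset of `⟨zⁿ⟩`. -/
def sameCoset (z : G) (n : ℕ) (a b : G) : Prop := ∃ k : ℤ, a⁻¹ * b = (z ^ n) ^ k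

open Classical in
/-- The lexicographic circular ordering `dₙ` of `H` built from the short exact sequence
`1 → ⟨zⁿ⟩ → H → H/⟨zⁿ⟩ → 1`: on triples in pairwise distinct cosets it is the circular
ordering `cₙ` of the quotient (computed, via the minimal coset representatives `rep`, as
the sign of the permutation sorting the representatives); on the remaining triples it is
given by the lexicographic extension formula using the ordering of `⟨zⁿ⟩` with `zⁿ > 1`,
with the two-coincidence cases determined by cyclic invariance. -/
noncomputable def dSeq (P : Set G) (z : G) (n : ℕ) (rep : G → G) : G → G → G → ℤ :=
  fun g₁ g₂ g₃ =>
    if ¬ sameCoset z n g₁ g₂ ∧ ¬ sameCoset z n g₁ g₃ ∧ ¬ sameCoset z n g₂ g₃ then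
      circOfCone P (rep g₁) (rep g₂) (rep g₃)
    else if sameCoset z n g₁ g₂ ∧ sameCoset z n g₂ g₃ then
      circOfCone (kerCone z n) 1 (g₁⁻¹ * g₂) (g₁⁻¹ * g₃)
    else if sameCoset z n g₁ g₂ then
      circOfCone (kerCone z n) (g₂⁻¹ * g₁) 1 (g₁⁻¹ * g₂)
    else if sameCoset z n g₂ g₃ then
      circOfCone (kerCone z n) (g₃⁻¹ * g₂) 1 (g₂⁻¹ * g₃)
    else
      circOfCone (kerCone z n) (g₁⁻¹ * g₃) 1 (g₃⁻¹ * g₁)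


section Helpers

open Filter

variable {P : Set G} {z : G}

private lemma pone (hP : IsPositiveCone P) : (1:G) ∉ P := by
  intro h
  have h2 : (1:G) ∈ P ∪ P⁻¹ := Or.inl h
  rw [hP.2] at h2
  exact h2 rfl

private lemma pmul (hP : IsPositiveCone P) {a b : G} (ha : a ∈ P) (hb : b ∈ P) :
    a * b ∈ P := hP.1 a ha b hb

private lemma pasymm (hP : IsPositiveCone P) {a b : G}
    (h1 : coneLt P a b) (h2 : coneLt P b a) : False := by
  have h3 := pmul hP h1 h2
  rw [show a⁻¹ * b * (b⁻¹ * a) = 1 by group] at h3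
  exact pone hP h3

private lemma ptrans (hP : IsPositiveCone P) {a b c : G}
    (h1 : coneLt P a b) (h2 : coneLt P b c) : coneLt P a c := by
  have h3 := pmul hP h1 h2
  rwa [show a⁻¹ * b * (b⁻¹ * c) = a⁻¹ * c by group] at h3

private lemma ptotal (hP : IsPositiveCone P) {a b : G} (h : a ≠ b) :
    coneLt P a b ∨ coneLt P b a := by
  have hne : a⁻¹ * b ≠ 1 := fun he => h (inv_mul_eq_one.mp he)
  have h2 : a⁻¹ * b ∈ P ∪ P⁻¹ := by rw [hP.2]; exact hne
  rcases h2 with h' | h'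
  · exact Or.inl h'
  · right
    have h3 : (a⁻¹ * b)⁻¹ ∈ P := by rwa [Set.mem_inv] at h'
    rwa [show (a⁻¹ * b)⁻¹ = b⁻¹ * a by group] at h3

private lemma lt_mul_w {a b w : G} (hw : ∀ h : G, w * h = h * w)
    (h : coneLt P a b) : coneLt P (a * w) (b * w) := by
  have he : (a * w)⁻¹ * (b * w) = a⁻¹ * b := by
    rw [mul_inv_rev]
    calc w⁻¹ * a⁻¹ * (b * w) = w⁻¹ * (a⁻¹ * b * w) := by group
      _ = w⁻¹ * (w * (a⁻¹ * b)) := by rw [hw (a⁻¹ * b)]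
      _ = a⁻¹ * b := by group
  show (a * w)⁻¹ * (b * w) ∈ P
  rw [he]; exact h

private lemma zc_zpow (hzc : ∀ h : G, z * h = h * z) (j : ℤ) (h : G) :
    z ^ j * h = h * z ^ j :=
  ((show Commute z h from hzc h).zpow_left j).eq

private lemma zc_pow (hzc : ∀ h : G, z * h = h * z) (n : ℕ) (h : G) :
    z ^ n * h = h * z ^ n :=
  ((show Commute z h from hzc h).pow_left n).eq

private lemma zpow_mem (hP : IsPositiveCone P) (hzpos : z ∈ P) {k : ℤ} (hk : 0 < k) :
    z ^ k ∈ P := by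
  refine Int.le_induction (motive := fun k _ => z ^ k ∈ P) (m := 1) ?_ ?_ k (by omega)
  · simpa using hzpos
  · intro m _ ih
    rw [zpow_add_one]
    exact pmul hP ih hzpos

private lemma zpow_mem_iff (hP : IsPositiveCone P) (hzpos : z ∈ P) {k : ℤ} :
    z ^ k ∈ P ↔ 0 < k := by
  constructor
  · intro h
    rcases lt_trichotomy k 0 with hk | hk | hk
    · exfalso
      have h2 : z ^ (-k) ∈ P := zpow_mem hP hzpos (by omega)
      have h3 := pmul hP h h2
      rw [← zpow_add] at h3
      simp at h3
      exact pone hP h3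
    · subst hk; simp at h; exact absurd h (pone hP)
    · exact hk
  · exact zpow_mem hP hzpos

private lemma zlt_iff (hP : IsPositiveCone P) (hzpos : z ∈ P) {m k : ℤ} :
    coneLt P (z ^ m) (z ^ k) ↔ m < k := by
  show (z ^ m)⁻¹ * z ^ k ∈ P ↔ m < k
  rw [← zpow_neg, ← zpow_add, zpow_mem_iff hP hzpos]
  omega

private lemma pow_pow (z : G) (n : ℕ) (k : ℤ) : (z ^ n) ^ k = z ^ ((n : ℤ) * k) := by
  rw [← zpow_natCast z n, ← zpow_mul]

private lemma le_lt_trans' (hP : IsPositiveCone P) {a b c : G}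
    (h1 : a = b ∨ coneLt P a b) (h2 : coneLt P b c) : coneLt P a c := by
  rcases h1 with h1 | h1
  · subst h1; exact h2
  · exact ptrans hP h1 h2

private lemma lt_le_trans' (hP : IsPositiveCone P) {a b c : G}
    (h1 : coneLt P a b) (h2 : b = c ∨ coneLt P b c) : coneLt P a c := by
  rcases h2 with h2 | h2
  · exact h2 ▸ h1
  · exact ptrans hP h1 h2

private lemma zle (hP : IsPositiveCone P) (hzpos : z ∈ P) {m k : ℤ} (h : m ≤ k) :
    z ^ m = z ^ k ∨ coneLt P (z ^ m) (z ^ k) := by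
  rcases eq_or_lt_of_le h with h' | h'
  · exact Or.inl (by rw [h'])
  · exact Or.inr ((zlt_iff hP hzpos).mpr h')

private lemma floor_exists (hP : IsPositiveCone P)
    (hzc : ∀ h : G, z * h = h * z) (hzpos : z ∈ P)
    (hzcof : ∀ h : G, ∃ m k : ℤ, coneLt P (z ^ m) h ∧ coneLt P h (z ^ k))
    (n : ℕ) (hn : 1 ≤ n) (h : G) :
    ∃! r : G, (∃ k : ℤ, r = h * (z ^ n) ^ k) ∧ (r = 1 ∨ r ∈ P) ∧ coneLt P r (z ^ n) := by
  obtain ⟨m, K, hm, hK⟩ := hzcof h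
  have hn' : (1:ℤ) ≤ (n:ℤ) := by exact_mod_cast hn
  have hbdd : ∃ b : ℤ, ∀ j : ℤ,
      (z ^ ((n:ℤ) * j) = h ∨ coneLt P (z ^ ((n:ℤ) * j)) h) → j ≤ b := by
    refine ⟨(K.natAbs : ℤ), fun j hj => ?_⟩
    have h1 : coneLt P (z ^ ((n:ℤ) * j)) (z ^ K) := by
      rcases hj with hj | hj
      · rw [hj]; exact hK
      · exact ptrans hP hj hK
    have h2 : (n:ℤ) * j < K := (zlt_iff hP hzpos).mp h1
    rcases le_or_gt j 0 with hj0 | hj0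
    · omega
    · have h3 : (1:ℤ) * j ≤ (n:ℤ) * j := mul_le_mul_of_nonneg_right hn' (by omega)
      have h4 := Int.le_natAbs (a := K)
      linarith
  have hinh : ∃ j : ℤ, (z ^ ((n:ℤ) * j) = h ∨ coneLt P (z ^ ((n:ℤ) * j)) h) := by
    refine ⟨-(m.natAbs : ℤ) - 1, ?_⟩
    have hj1 : (n:ℤ) * (-(m.natAbs : ℤ) - 1) ≤ 1 * (-(m.natAbs : ℤ) - 1) :=
      mul_le_mul_of_nonpos_right hn' (by omega)
    have hj3 : (1:ℤ) * (-(m.natAbs : ℤ) - 1) ≤ m := by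
      have := Int.le_natAbs (a := -m); omega
    exact Or.inr (le_lt_trans' hP (zle hP hzpos (le_trans hj1 hj3)) hm)
  obtain ⟨j0, hj0, hmax⟩ := Int.exists_greatest_of_bdd hbdd hinh
  refine ⟨h * (z ^ n) ^ (-j0), ⟨⟨-j0, rfl⟩, ?_, ?_⟩, ?_⟩
  · rcases hj0 with hj | hj
    · left
      rw [pow_pow, ← hj, ← zpow_add,
        show (n:ℤ) * j0 + (n:ℤ) * (-j0) = 0 by ring, zpow_zero]
    · right
      have h1 : z ^ (-((n:ℤ) * j0)) * h ∈ P := by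
        have h2 : (z ^ ((n:ℤ) * j0))⁻¹ * h ∈ P := hj
        rwa [← zpow_neg] at h2
      rw [pow_pow, mul_neg, ← zc_zpow hzc]
      exact h1
  · have hnot : ¬ (z ^ ((n:ℤ) * (j0 + 1)) = h ∨
        coneLt P (z ^ ((n:ℤ) * (j0 + 1))) h) := by
      intro hq
      have := hmax _ hq
      omega
    push_neg at hnot
    obtain ⟨hne, hnlt⟩ := hnot
    have hlt : coneLt P h (z ^ ((n:ℤ) * (j0 + 1))) :=
      (ptotal hP (fun he => hne he.symm)).resolve_right hnlt
    have h2 := lt_mul_w (P := P) (w := z ^ ((n:ℤ) * (-j0)))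
      (fun x => zc_zpow hzc _ x) hlt
    rw [← zpow_add, show (n:ℤ) * (j0 + 1) + (n:ℤ) * (-j0) = (n:ℤ) by ring,
      zpow_natCast] at h2
    rwa [pow_pow]
  · rintro r' ⟨⟨k', hk'⟩, hge, hlt⟩
    rw [pow_pow] at hk'
    have hQk : z ^ ((n:ℤ) * (-k')) = h ∨ coneLt P (z ^ ((n:ℤ) * (-k'))) h := by
      rcases hge with hr1 | hr2
      · left
        rw [hk'] at hr1
        have he : h = (z ^ ((n:ℤ) * k'))⁻¹ := mul_eq_one_iff_eq_inv.mp hr1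
        rw [he, ← zpow_neg, mul_neg]
      · right
        show (z ^ ((n:ℤ) * -k'))⁻¹ * h ∈ P
        rw [← zpow_neg, show -((n:ℤ) * -k') = (n:ℤ) * k' by ring, zc_zpow hzc, ← hk']
        exact hr2
    have h1 : -k' ≤ j0 := hmax _ hQk
    have h2 : j0 ≤ -k' := by
      by_contra hcon
      push_neg at hcon
      rw [hk'] at hlt
      have h3 := lt_mul_w (P := P) (w := z ^ (-((n:ℤ) * k')))
        (fun x => zc_zpow hzc _ x) hlt
      rw [mul_assoc, ← zpow_add, show (n:ℤ) * k' + -((n:ℤ) * k') = 0 by ring,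
        zpow_zero, mul_one, ← zpow_natCast z n, ← zpow_add,
        show (n:ℤ) + -((n:ℤ) * k') = (n:ℤ) * (1 - k') by ring] at h3
      have h4 : coneLt P (z ^ ((n:ℤ) * j0)) (z ^ ((n:ℤ) * (1 - k'))) :=
        le_lt_trans' hP hj0 h3
      have h5 : (n:ℤ) * j0 < (n:ℤ) * (1 - k') := (zlt_iff hP hzpos).mp h4
      have h6 : j0 < 1 - k' := lt_of_mul_lt_mul_left h5 (by omega)
      omega
    have hk0 : k' = -j0 := by omega
    rw [hk0] at hk'
    rw [pow_pow]
    exact hk'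

private lemma not_neg_pos (hP : IsPositiveCone P) {h : G} (hh : ¬ coneLt P h 1) :
    h = 1 ∨ h ∈ P := by
  by_cases he : h = 1
  · exact Or.inl he
  · rcases ptotal hP he with h1 | h1
    · exact absurd h1 hh
    · right
      have h2 : (1:G)⁻¹ * h ∈ P := h1
      simpa using h2

private lemma rep_ev_pos (hP : IsPositiveCone P)
    (hzc : ∀ h : G, z * h = h * z) (hzpos : z ∈ P)
    (hzcof : ∀ h : G, ∃ m k : ℤ, coneLt P (z ^ m) h ∧ coneLt P h (z ^ k))
    {rep : ℕ → G → G}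
    (hrep : ∀ n : ℕ, 1 ≤ n → ∀ h : G,
      (∃ k : ℤ, rep n h = h * (z ^ n) ^ k) ∧ (rep n h = 1 ∨ rep n h ∈ P) ∧
        coneLt P (rep n h) (z ^ n))
    (h : G) (hpos : ¬ coneLt P h 1) :
    ∀ᶠ n in atTop, rep n h = h := by
  obtain ⟨m, K, hm, hK⟩ := hzcof h
  have hpos' := not_neg_pos hP hpos
  have h1le : (1:G) = h ∨ coneLt P (1:G) h := by
    rcases hpos' with h1 | h1
    · exact Or.inl h1.symm
    · right
      show (1:G)⁻¹ * h ∈ P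
      simpa using h1
  have hK0 : 0 < K := by
    by_contra hc
    push_neg at hc
    have hlt1 : coneLt P (1:G) (z ^ K) := le_lt_trans' hP h1le hK
    have h0 : coneLt P (z ^ (0:ℤ)) (z ^ K) := by rwa [zpow_zero]
    have := (zlt_iff hP hzpos).mp h0
    omega
  filter_upwards [eventually_ge_atTop K.toNat, eventually_ge_atTop 1] with n hn1 hn2
  have hKn : K ≤ (n:ℤ) := by omega
  have hlast : coneLt P h (z ^ n) := by
    have h5 := lt_le_trans' hP hK (zle hP hzpos hKn)
    rwa [zpow_natCast] at h5
  exact ExistsUnique.unique (floor_exists hP hzc hzpos hzcof n hn2 h)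
    (hrep n hn2 h) ⟨⟨0, by simp⟩, hpos', hlast⟩

private lemma rep_ev_neg (hP : IsPositiveCone P)
    (hzc : ∀ h : G, z * h = h * z) (hzpos : z ∈ P)
    (hzcof : ∀ h : G, ∃ m k : ℤ, coneLt P (z ^ m) h ∧ coneLt P h (z ^ k))
    {rep : ℕ → G → G}
    (hrep : ∀ n : ℕ, 1 ≤ n → ∀ h : G,
      (∃ k : ℤ, rep n h = h * (z ^ n) ^ k) ∧ (rep n h = 1 ∨ rep n h ∈ P) ∧
        coneLt P (rep n h) (z ^ n))
    (h : G) (hneg : coneLt P h 1) :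
    ∀ᶠ n in atTop, rep n h = h * z ^ n := by
  obtain ⟨m, K, hm, hK⟩ := hzcof h
  filter_upwards [eventually_ge_atTop (-m).toNat, eventually_ge_atTop 1] with n hn1 hn2
  have hmn : 0 ≤ m + (n:ℤ) := by omega
  apply ExistsUnique.unique (floor_exists hP hzc hzpos hzcof n hn2 h) (hrep n hn2 h)
  refine ⟨⟨1, by simp⟩, ?_, ?_⟩
  · right
    have h1 : coneLt P (z ^ m * z ^ ((n:ℤ))) (h * z ^ ((n:ℤ))) :=
      lt_mul_w (fun x => zc_zpow hzc _ x) hm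
    rw [← zpow_add] at h1
    have h2 : (1:G) = z ^ (m + (n:ℤ)) ∨ coneLt P (1:G) (z ^ (m + (n:ℤ))) := by
      have h6 := zle hP hzpos hmn
      rwa [zpow_zero] at h6
    have h3 : coneLt P (1:G) (h * z ^ ((n:ℤ))) := le_lt_trans' hP h2 h1
    have h4 : (1:G)⁻¹ * (h * z ^ ((n:ℤ))) ∈ P := h3
    rw [zpow_natCast] at h4
    simpa using h4
  · have h1 : coneLt P (h * z ^ ((n:ℤ))) ((1:G) * z ^ ((n:ℤ))) :=
      lt_mul_w (fun x => zc_zpow hzc _ x) hneg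
    rw [one_mul, zpow_natCast] at h1
    exact h1

private lemma lt_shift (hP : IsPositiveCone P)
    (hzc : ∀ h : G, z * h = h * z) (hzpos : z ∈ P)
    (hzcof : ∀ h : G, ∃ m k : ℤ, coneLt P (z ^ m) h ∧ coneLt P h (z ^ k))
    (y h : G) : ∀ᶠ n in atTop, coneLt P y (h * z ^ n) := by
  obtain ⟨mh, K1, hmh, _⟩ := hzcof h
  obtain ⟨m2, Ky, _, hKy⟩ := hzcof y
  filter_upwards [eventually_ge_atTop (Ky - mh).toNat] with n hn
  have hle : Ky ≤ mh + (n:ℤ) := by omega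
  have h1 : coneLt P (z ^ mh * z ^ ((n:ℤ))) (h * z ^ ((n:ℤ))) :=
    lt_mul_w (fun x => zc_zpow hzc _ x) hmh
  rw [← zpow_add] at h1
  have h2 : coneLt P y (z ^ (mh + (n:ℤ))) := lt_le_trans' hP hKy (zle hP hzpos hle)
  have h3 := ptrans hP h2 h1
  rwa [zpow_natCast] at h3

private lemma sameCoset_refl (z : G) (n : ℕ) (a : G) : sameCoset z n a a :=
  ⟨0, by simp⟩

private lemma not_sameCoset (hP : IsPositiveCone P) (hzpos : z ∈ P)
    (hzcof : ∀ h : G, ∃ m k : ℤ, coneLt P (z ^ m) h ∧ coneLt P h (z ^ k))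
    {x y : G} (hxy : x ≠ y) :
    ∀ᶠ n in atTop, ¬ sameCoset z n x y := by
  obtain ⟨m, K, hm, hK⟩ := hzcof (x⁻¹ * y)
  filter_upwards [eventually_ge_atTop (m.natAbs + K.natAbs + 1)] with n hn
  rintro ⟨k, hk⟩
  rw [pow_pow] at hk
  have hk0 : k ≠ 0 := by
    rintro rfl
    rw [mul_zero, zpow_zero] at hk
    exact hxy (inv_mul_eq_one.mp hk)
  rw [hk] at hm hK
  have h1 : m < (n:ℤ) * k := (zlt_iff hP hzpos).mp hm
  have h2 : (n:ℤ) * k < K := (zlt_iff hP hzpos).mp hK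
  have h3 : (n:ℤ) ≤ |(n:ℤ) * k| := by
    rw [abs_mul, abs_of_nonneg (by positivity : (0:ℤ) ≤ (n:ℤ))]
    exact le_mul_of_one_le_right (by positivity) (Int.one_le_abs hk0)
  rw [Int.abs_eq_natAbs] at h3
  omega

private abbrev Chain3 (P : Set G) (a b c : G) : Prop :=
  (coneLt P a b ∧ coneLt P b c) ∨ (coneLt P b c ∧ coneLt P c a) ∨
    (coneLt P c a ∧ coneLt P a b)

private lemma circ_one_of {a b c : G} (h : Chain3 P a b c) :
    circOfCone P a b c = 1 := by
  unfold circOfCone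
  rw [if_pos h]

private lemma circ_neg_of (hP : IsPositiveCone P) {a b c : G} (h : Chain3 P c b a) :
    circOfCone P a b c = -1 := by
  have hnot : ¬ ((coneLt P a b ∧ coneLt P b c) ∨ (coneLt P b c ∧ coneLt P c a) ∨
      (coneLt P c a ∧ coneLt P a b)) := by
    rintro (⟨u, v⟩ | ⟨u, v⟩ | ⟨u, v⟩) <;>
      rcases h with ⟨x, y⟩ | ⟨x, y⟩ | ⟨x, y⟩ <;>
      first
        | exact pasymm hP u x
        | exact pasymm hP u y
        | exact pasymm hP v x
        | exact pasymm hP v y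
  unfold circOfCone
  rw [if_neg hnot, if_pos h]

private lemma circ_aaa (Q : Set G) (h1 : (1:G) ∉ Q) (a : G) :
    circOfCone Q a a a = 0 := by
  have hlt : ¬ coneLt Q a a := by
    intro h
    have h2 : (1:G) ∈ Q := by
      have h3 : a⁻¹ * a ∈ Q := h
      simpa using h3
    exact h1 h2
  unfold circOfCone
  rw [if_neg (by tauto), if_neg (by tauto)]

private lemma circ_deg (hP : IsPositiveCone P) {a b c : G}
    (h : a = b ∨ a = c ∨ b = c) : circOfCone P a b c = 0 := by
  unfold circOfCone
  split_ifs with h1 h2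
  · exfalso
    rcases h with rfl | rfl | rfl <;>
      rcases h1 with ⟨u, v⟩ | ⟨u, v⟩ | ⟨u, v⟩ <;>
      first
        | exact pasymm hP u v
        | exact pasymm hP u u
        | exact pasymm hP v v
  · exfalso
    rcases h with rfl | rfl | rfl <;>
      rcases h2 with ⟨u, v⟩ | ⟨u, v⟩ | ⟨u, v⟩ <;>
      first
        | exact pasymm hP u v
        | exact pasymm hP u u
        | exact pasymm hP v v
  · rfl

private lemma one_notMem_ker (hP : IsPositiveCone P) (hzpos : z ∈ P)
    {n : ℕ} (hn : 1 ≤ n) : (1:G) ∉ kerCone z n := by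
  rintro ⟨k, hk, he⟩
  rw [pow_pow] at he
  have hnk : (0:ℤ) < (n:ℤ) * k := by
    have h1 : (0:ℤ) < (n:ℤ) := by exact_mod_cast hn
    exact mul_pos h1 hk
  have h2 : z ^ ((n:ℤ) * k) ∈ P := zpow_mem hP hzpos hnk
  rw [← he] at h2
  exact pone hP h2

private lemma chain_reps (hP : IsPositiveCone P)
    (hzc : ∀ h : G, z * h = h * z) (hzpos : z ∈ P)
    (hzcof : ∀ h : G, ∃ m k : ℤ, coneLt P (z ^ m) h ∧ coneLt P h (z ^ k))
    {rep : ℕ → G → G}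
    (hrep : ∀ n : ℕ, 1 ≤ n → ∀ h : G,
      (∃ k : ℤ, rep n h = h * (z ^ n) ^ k) ∧ (rep n h = 1 ∨ rep n h ∈ P) ∧
        coneLt P (rep n h) (z ^ n))
    {a b c : G} (h1 : coneLt P a b) (h2 : coneLt P b c) :
    ∀ᶠ n in atTop, Chain3 P (rep n a) (rep n b) (rep n c) := by
  have wc : ∀ n : ℕ, ∀ x : G, z ^ n * x = x * z ^ n := fun n x => zc_pow hzc n x
  by_cases ha : coneLt P a 1
  · by_cases hb : coneLt P b 1
    · by_cases hc : coneLt P c 1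
      · filter_upwards [rep_ev_neg hP hzc hzpos hzcof hrep a ha,
          rep_ev_neg hP hzc hzpos hzcof hrep b hb,
          rep_ev_neg hP hzc hzpos hzcof hrep c hc] with n e1 e2 e3
        rw [e1, e2, e3]
        exact Or.inl ⟨lt_mul_w (wc n) h1, lt_mul_w (wc n) h2⟩
      · filter_upwards [rep_ev_neg hP hzc hzpos hzcof hrep a ha,
          rep_ev_neg hP hzc hzpos hzcof hrep b hb,
          rep_ev_pos hP hzc hzpos hzcof hrep c hc,
          lt_shift hP hzc hzpos hzcof c a] with n e1 e2 e3 e4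
        rw [e1, e2, e3]
        exact Or.inr (Or.inr ⟨e4, lt_mul_w (wc n) h1⟩)
    · have hc : ¬ coneLt P c 1 := fun hcc => hb (ptrans hP h2 hcc)
      filter_upwards [rep_ev_neg hP hzc hzpos hzcof hrep a ha,
        rep_ev_pos hP hzc hzpos hzcof hrep b hb,
        rep_ev_pos hP hzc hzpos hzcof hrep c hc,
        lt_shift hP hzc hzpos hzcof c a] with n e1 e2 e3 e4
      rw [e1, e2, e3]
      exact Or.inr (Or.inl ⟨h2, e4⟩)
  · have hb : ¬ coneLt P b 1 := fun hbb => ha (ptrans hP h1 hbb)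
    have hc : ¬ coneLt P c 1 := fun hcc => hb (ptrans hP h2 hcc)
    filter_upwards [rep_ev_pos hP hzc hzpos hzcof hrep a ha,
      rep_ev_pos hP hzc hzpos hzcof hrep b hb,
      rep_ev_pos hP hzc hzpos hzcof hrep c hc] with n e1 e2 e3
    rw [e1, e2, e3]
    exact Or.inl ⟨h1, h2⟩

private lemma reps_circ (hP : IsPositiveCone P)
    (hzc : ∀ h : G, z * h = h * z) (hzpos : z ∈ P)
    (hzcof : ∀ h : G, ∃ m k : ℤ, coneLt P (z ^ m) h ∧ coneLt P h (z ^ k))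
    {rep : ℕ → G → G}
    (hrep : ∀ n : ℕ, 1 ≤ n → ∀ h : G,
      (∃ k : ℤ, rep n h = h * (z ^ n) ^ k) ∧ (rep n h = 1 ∨ rep n h ∈ P) ∧
        coneLt P (rep n h) (z ^ n))
    {a b c : G} (hab : a ≠ b) (hac : a ≠ c) (hbc : b ≠ c) :
    ∀ᶠ n in atTop,
      circOfCone P (rep n a) (rep n b) (rep n c) = circOfCone P a b c := by
  rcases ptotal hP hab with h1 | h1 <;> rcases ptotal hP hac with h2 | h2 <;>
    rcases ptotal hP hbc with h3 | h3
  · -- a < b, a < c, b < c : chain a b c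
    filter_upwards [chain_reps hP hzc hzpos hzcof hrep h1 h3] with n hn
    rw [circ_one_of (Or.inl ⟨h1, h3⟩), circ_one_of hn]
  · -- a < b, a < c, c < b : chain a c b
    filter_upwards [chain_reps hP hzc hzpos hzcof hrep h2 h3] with n hn
    rw [circ_neg_of hP (Or.inr (Or.inr ⟨h2, h3⟩)), circ_neg_of hP (by tauto)]
  · -- a < b, c < a, b < c : impossible
    exact absurd (ptrans hP (ptrans hP h1 h3) h2) (fun h => pasymm hP h h)
  · -- a < b, c < a, c < b : chain c a b
    filter_upwards [chain_reps hP hzc hzpos hzcof hrep h2 h1] with n hn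
    rw [circ_one_of (Or.inr (Or.inr ⟨h2, h1⟩)), circ_one_of (by tauto)]
  · -- b < a, a < c, b < c : chain b a c
    filter_upwards [chain_reps hP hzc hzpos hzcof hrep h1 h2] with n hn
    rw [circ_neg_of hP (Or.inr (Or.inl ⟨h1, h2⟩)), circ_neg_of hP (by tauto)]
  · -- b < a, a < c, c < b : impossible
    exact absurd (ptrans hP (ptrans hP h2 h3) h1) (fun h => pasymm hP h h)
  · -- b < a, c < a, b < c : chain b c a
    filter_upwards [chain_reps hP hzc hzpos hzcof hrep h3 h2] with n hn
    rw [circ_one_of (Or.inr (Or.inl ⟨h3, h2⟩)), circ_one_of (by tauto)]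
  · -- b < a, c < a, c < b : chain c b a
    filter_upwards [chain_reps hP hzc hzpos hzcof hrep h3 h1] with n hn
    rw [circ_neg_of hP (Or.inl ⟨h3, h1⟩), circ_neg_of hP (by tauto)]

end Helpers

/-- Part of Theorem 6.2: let `(H,<)` be a left-ordered group (ordering given by the cone
`P`) with a positive cofinal central element `z`.  Then for each `n ≥ 1` every `h ∈ H` has
a unique coset representative `[h]ₙ ∈ h⟨zⁿ⟩` with `id ≤ [h]ₙ < zⁿ`, and the sequence of
lexicographic circular orderings `dₙ` built from `1 → ⟨zⁿ⟩ → H → H/⟨zⁿ⟩ → 1` converges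
in `CO(H)` to the secret left-ordering `c_<`. -/
theorem stmt15 (P : Set G) (hP : IsPositiveCone P) (z : G)
    (hzcentral : ∀ h : G, z * h = h * z) (hzpos : z ∈ P)
    (hzcofinal : ∀ h : G, ∃ m k : ℤ, coneLt P (z ^ m) h ∧ coneLt P h (z ^ k)) :
    (∀ n : ℕ, 1 ≤ n → ∀ h : G, ∃! r : G,
      (∃ k : ℤ, r = h * (z ^ n) ^ k) ∧ (r = 1 ∨ r ∈ P) ∧ coneLt P r (z ^ n)) ∧
    (∀ rep : ℕ → G → G,
      (∀ n : ℕ, 1 ≤ n → ∀ h : G,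
        (∃ k : ℤ, rep n h = h * (z ^ n) ^ k) ∧ (rep n h = 1 ∨ rep n h ∈ P) ∧
          coneLt P (rep n h) (z ^ n)) →
      ∀ d : ℕ → CircOrd G, (∀ n : ℕ, 1 ≤ n → (d n).1 = dSeq P z n (rep n)) →
      ∀ csec : CircOrd G, csec.1 = circOfCone P →
      Filter.Tendsto d Filter.atTop (nhds csec)) := by
  constructor
  · intro n hn h
    exact floor_exists hP hzcentral hzpos hzcofinal n hn h
  · intro rep hrep d hd csec hcsec
    rw [tendsto_subtype_rng, tendsto_pi_nhds]
    intro g₁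
    rw [tendsto_pi_nhds]
    intro g₂
    rw [tendsto_pi_nhds]
    intro g₃
    apply tendsto_nhds_of_eventually_eq
    simp only [hcsec]
    have hone : ∀ᶠ n : ℕ in Filter.atTop, 1 ≤ n := Filter.eventually_ge_atTop 1
    by_cases h12 : g₁ = g₂
    · subst h12
      by_cases h13 : g₁ = g₃
      · subst h13
        filter_upwards [hone] with n hn
        rw [hd n hn]
        unfold dSeq
        rw [if_neg (fun hcon => hcon.1 (sameCoset_refl z n _)),
          if_pos ⟨sameCoset_refl z n _, sameCoset_refl z n _⟩]
        simp only [inv_mul_cancel]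
        rw [circ_aaa _ (one_notMem_ker hP hzpos hn), circ_deg hP (Or.inl rfl)]
      · filter_upwards [hone, not_sameCoset hP hzpos hzcofinal h13] with n hn hns
        rw [hd n hn]
        unfold dSeq
        rw [if_neg (fun hcon => hcon.1 (sameCoset_refl z n _)),
          if_neg (fun hcon => hns hcon.2),
          if_pos (sameCoset_refl z n _)]
        simp only [inv_mul_cancel]
        rw [circ_aaa _ (one_notMem_ker hP hzpos hn), circ_deg hP (Or.inl rfl)]
    · by_cases h13 : g₁ = g₃
      · subst h13
        have h23 : g₂ ≠ g₁ := fun he => h12 he.symm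
        filter_upwards [hone, not_sameCoset hP hzpos hzcofinal h12,
          not_sameCoset hP hzpos hzcofinal h23] with n hn hns1 hns2
        rw [hd n hn]
        unfold dSeq
        rw [if_neg (fun hcon => hcon.2.1 (sameCoset_refl z n _)),
          if_neg (fun hcon => hns1 hcon.1),
          if_neg hns1, if_neg hns2]
        simp only [inv_mul_cancel]
        rw [circ_aaa _ (one_notMem_ker hP hzpos hn), circ_deg hP (Or.inr (Or.inl rfl))]
      · by_cases h23 : g₂ = g₃
        · subst h23
          filter_upwards [hone, not_sameCoset hP hzpos hzcofinal h12] with n hn hns1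
          rw [hd n hn]
          unfold dSeq
          rw [if_neg (fun hcon => hcon.2.2 (sameCoset_refl z n _)),
            if_neg (fun hcon => hns1 hcon.1),
            if_neg hns1, if_pos (sameCoset_refl z n _)]
          simp only [inv_mul_cancel]
          rw [circ_aaa _ (one_notMem_ker hP hzpos hn),
            circ_deg hP (Or.inr (Or.inr rfl))]
        · filter_upwards [hone, not_sameCoset hP hzpos hzcofinal h12,
            not_sameCoset hP hzpos hzcofinal h13,
            not_sameCoset hP hzpos hzcofinal h23,
            reps_circ hP hzcentral hzpos hzcofinal hrep h12 h13 h23]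
            with n hn hns1 hns2 hns3 hcirc
          rw [hd n hn]
          unfold dSeq
          rw [if_pos ⟨hns1, hns2, hns3⟩]
          exact hcirc


end Paper
end

section
/- Let (H,<) be a left-ordered group with a central element z, id < z, that is cofinal, and let φ : L → H be an injective group homomorphism such that the image φ(L) is cofinal in (H,<). Let <^φ be the left-ordering of L defined by g <^φ h iff φ(g) < φ(h). Then the secret left-ordering c_{<^φ} ∈ CO(L) is an accumulation point of CO_g(L): every open neighborhood of c_{<^φ} in CO(L) contains infinitely many genuine circular orderings of L. -/
namespace Paper

variable {G : Type*} [Group G]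

section Generic
variable {α : Type*}

open Classical in
noncomputable def crc (s : α → α → Prop) : α → α → α → ℤ := fun a b c =>
  if (s a b ∧ s b c) ∨ (s b c ∧ s c a) ∨ (s c a ∧ s a b) then 1
  else if (s c b ∧ s b a) ∨ (s b a ∧ s a c) ∨ (s a c ∧ s c b) then -1
  else 0

open Classical in
noncomputable def eta (s : α → α → Prop) (a b : α) : ℤ :=
  if s a b then 1 else if s b a then -1 else 0

structure STO (s : α → α → Prop) : Prop where
  irrefl : ∀ a, ¬ s a a
  trans : ∀ {a b c}, s a b → s b c → s a c
  tri : ∀ a b, a = b ∨ s a b ∨ s b a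

theorem STO.asymm {s : α → α → Prop} (hs : STO s) {a b : α} (h : s a b) : ¬ s b a :=
  fun h' => hs.irrefl a (hs.trans h h')

theorem STO.ne {s : α → α → Prop} (hs : STO s) {a b : α} (h : s a b) : a ≠ b :=
  fun e => hs.irrefl a (e ▸ h)

theorem eta_of {s : α → α → Prop} {a b : α} (h : s a b) : eta s a b = 1 := by
  simp [eta, h]

theorem eta_of_rev {s : α → α → Prop} (hs : STO s) {a b : α} (h : s b a) :
    eta s a b = -1 := by
  simp [eta, hs.asymm h, h]

theorem eta_of_eq {s : α → α → Prop} (hs : STO s) {a b : α} (h : a = b) :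
    eta s a b = 0 := by
  subst h; simp [eta, hs.irrefl a]

theorem eta_antisymm {s : α → α → Prop} (hs : STO s) (a b : α) :
    eta s a b = - eta s b a := by
  rcases hs.tri a b with h | h | h
  · rw [eta_of_eq hs h, eta_of_eq hs h.symm]; ring
  · rw [eta_of h, eta_of_rev hs h]; ring
  · rw [eta_of h, eta_of_rev hs h]

theorem crc_eq_eta {s : α → α → Prop} (hs : STO s) (a b c : α) :
    crc s a b c = eta s a b + eta s b c + eta s c a := by
  classical
  unfold crc
  split_ifs with h1 h2
  · rcases h1 with ⟨hab, hbc⟩ | ⟨hbc, hca⟩ | ⟨hca, hab⟩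
    · rw [eta_of hab, eta_of hbc, eta_of_rev hs (hs.trans hab hbc)]; ring
    · rw [eta_of hbc, eta_of hca, eta_of_rev hs (hs.trans hbc hca)]; ring
    · rw [eta_of hab, eta_of hca, eta_of_rev hs (hs.trans hca hab)]; ring
  · rcases h2 with ⟨hcb, hba⟩ | ⟨hba, hac⟩ | ⟨hac, hcb⟩
    · rw [eta_of_rev hs hba, eta_of_rev hs hcb, eta_of (hs.trans hcb hba)]; ring
    · rw [eta_of_rev hs hba, eta_of (hs.trans hba hac), eta_of_rev hs hac]; ring
    · rw [eta_of_rev hs hcb, eta_of_rev hs hac, eta_of (hs.trans hac hcb)]; ring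
  · rcases hs.tri a b with hab | hab | hab
    · subst hab
      have h3 := eta_antisymm hs a c
      have h4 := eta_of_eq hs (rfl : a = a)
      linarith
    · rcases hs.tri b c with hbc | hbc | hbc
      · subst hbc
        have h3 := eta_antisymm hs a b
        have h4 := eta_of_eq hs (rfl : b = b)
        linarith
      · exact absurd (Or.inl ⟨hab, hbc⟩) h1
      · rcases hs.tri a c with hac | hac | hac
        · subst hac
          have h3 := eta_antisymm hs a b
          have h4 := eta_of_eq hs (rfl : a = a)
          linarith
        · exact absurd (.inr (.inr ⟨hac, hbc⟩)) h2
        · exact absurd (.inr (.inr ⟨hac, hab⟩)) h1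
    · rcases hs.tri b c with hbc | hbc | hbc
      · subst hbc
        have h3 := eta_antisymm hs a b
        have h4 := eta_of_eq hs (rfl : b = b)
        linarith
      · rcases hs.tri a c with hac | hac | hac
        · subst hac
          have h3 := eta_antisymm hs a b
          have h4 := eta_of_eq hs (rfl : a = a)
          linarith
        · exact absurd (.inr (.inl ⟨hab, hac⟩)) h2
        · exact absurd (.inr (.inl ⟨hbc, hac⟩)) h1
      · exact absurd (.inl ⟨hbc, hab⟩) h2
theorem crc_values (s : α → α → Prop) (a b c : α) :
    crc s a b c = 0 ∨ crc s a b c = 1 ∨ crc s a b c = -1 := by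
  classical
  unfold crc
  split_ifs <;> simp

theorem crc_zero_iff {s : α → α → Prop} (hs : STO s) (a b c : α) :
    crc s a b c = 0 ↔ (a = b ∨ a = c ∨ b = c) := by
  rw [crc_eq_eta hs]
  constructor
  · intro h0
    by_contra hne
    push_neg at hne
    obtain ⟨hab, hac, hbc⟩ := hne
    rcases hs.tri a b with h1 | h1 | h1
    · exact hab h1
    · rcases hs.tri b c with h2 | h2 | h2
      · exact hbc h2
      · rw [eta_of h1, eta_of h2, eta_of_rev hs (hs.trans h1 h2)] at h0; omega
      · rcases hs.tri a c with h3 | h3 | h3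
        · exact hac h3
        · rw [eta_of h1, eta_of_rev hs h2, eta_of_rev hs h3] at h0; omega
        · rw [eta_of h1, eta_of_rev hs h2, eta_of h3] at h0; omega
    · rcases hs.tri b c with h2 | h2 | h2
      · exact hbc h2
      · rcases hs.tri a c with h3 | h3 | h3
        · exact hac h3
        · rw [eta_of_rev hs h1, eta_of h2, eta_of_rev hs h3] at h0; omega
        · rw [eta_of_rev hs h1, eta_of h2, eta_of h3] at h0; omega
      · rw [eta_of_rev hs h1, eta_of_rev hs h2, eta_of (hs.trans h2 h1)] at h0; omega
  · rintro (h | h | h)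
    · subst h
      have h3 := eta_antisymm hs a c
      have h4 := eta_of_eq hs (rfl : a = a)
      linarith
    · subst h
      have h3 := eta_antisymm hs a b
      have h4 := eta_of_eq hs (rfl : a = a)
      linarith
    · subst h
      have h3 := eta_antisymm hs a b
      have h4 := eta_of_eq hs (rfl : b = b)
      linarith

theorem crc_cocycle {s : α → α → Prop} (hs : STO s) (a b c d : α) :
    crc s b c d - crc s a c d + crc s a b d - crc s a b c = 0 := by
  rw [crc_eq_eta hs, crc_eq_eta hs, crc_eq_eta hs, crc_eq_eta hs]
  have h1 := eta_antisymm hs b d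
  have h2 := eta_antisymm hs a c
  have h3 := eta_antisymm hs a d
  have h4 := eta_antisymm hs a b
  have h5 := eta_antisymm hs b c
  have h6 := eta_antisymm hs c d
  linarith

end Generic


section ConeBasics
variable {H : Type*} [Group H] {P : Set H}

theorem IsPositiveCone.one_not_mem (hP : IsPositiveCone P) : (1:H) ∉ P := by
  intro h
  have h1 : (1:H) ∈ P ∪ P⁻¹ := Or.inl h
  rw [hP.2] at h1
  exact h1 rfl

theorem coneLt_sto (hP : IsPositiveCone P) : STO (coneLt P) where
  irrefl a h := by
    rw [coneLt, inv_mul_cancel] at h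
    exact hP.one_not_mem h
  trans := by
    intro a b c h1 h2
    have h3 := hP.1 _ h1 _ h2
    rw [coneLt] at *
    rwa [mul_assoc, ← mul_assoc b b⁻¹ c, mul_inv_cancel, one_mul] at h3
  tri := by
    intro a b
    by_cases he : a = b
    · exact Or.inl he
    · have h1 : a⁻¹ * b ∈ P ∪ P⁻¹ := by
        rw [hP.2]
        simp only [Set.mem_setOf_eq, ne_eq]
        intro h
        exact he (by rwa [inv_mul_eq_one] at h)
      rcases h1 with h1 | h1
      · exact Or.inr (Or.inl h1)
      · refine Or.inr (Or.inr ?_)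
        rw [coneLt]
        rwa [Set.mem_inv, mul_inv_rev, inv_inv] at h1

theorem coneLt_mul_left_iff {g a b : H} : coneLt P (g*a) (g*b) ↔ coneLt P a b := by
  rw [coneLt, coneLt, mul_inv_rev, mul_assoc, ← mul_assoc g⁻¹, inv_mul_cancel, one_mul]

end ConeBasics

structure COCtx (H : Type*) [Group H] where
  P : Set H
  hP : IsPositiveCone P
  z : H
  hzc : ∀ h : H, z * h = h * z
  hzpos : z ∈ P
  hzcof : ∀ h : H, ∃ m k : ℤ, coneLt P (z ^ m) h ∧ coneLt P h (z ^ k)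

namespace COCtx
variable {H : Type*} [Group H] (C : COCtx H)

def lt (a b : H) : Prop := coneLt C.P a b
def le (a b : H) : Prop := a = b ∨ C.lt a b

theorem sto : STO C.lt := coneLt_sto C.hP

theorem le_refl (a : H) : C.le a a := Or.inl rfl

theorem le_of_lt {a b : H} (h : C.lt a b) : C.le a b := Or.inr h

theorem lt_of_le_of_lt {a b c : H} (h1 : C.le a b) (h2 : C.lt b c) : C.lt a c := by
  rcases h1 with rfl | h1
  · exact h2
  · exact C.sto.trans h1 h2

theorem lt_of_lt_of_le {a b c : H} (h1 : C.lt a b) (h2 : C.le b c) : C.lt a c := by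
  rcases h2 with rfl | h2
  · exact h1
  · exact C.sto.trans h1 h2

theorem le_trans {a b c : H} (h1 : C.le a b) (h2 : C.le b c) : C.le a c := by
  rcases h1 with rfl | h1
  · exact h2
  · exact C.le_of_lt (C.lt_of_lt_of_le h1 h2)

theorem mul_lt_iff {g a b : H} : C.lt (g*a) (g*b) ↔ C.lt a b := coneLt_mul_left_iff

theorem mul_le_iff {g a b : H} : C.le (g*a) (g*b) ↔ C.le a b := by
  unfold le
  rw [mul_lt_iff, mul_right_inj]

theorem lt_not_lt {a b : H} (h : C.lt a b) : ¬ C.lt b a := C.sto.asymm h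

theorem lt_or_le (a b : H) : C.lt a b ∨ C.le b a := by
  rcases C.sto.tri a b with h | h | h
  · exact Or.inr (Or.inl h.symm)
  · exact Or.inl h
  · exact Or.inr (Or.inr h)

theorem zc (m : ℤ) (h : H) : C.z ^ m * h = h * C.z ^ m :=
  (Commute.zpow_left (C.hzc h) m).eq

theorem zpow_mem {m : ℤ} (hm : 0 < m) : C.z ^ m ∈ C.P := by
  have key : ∀ k : ℕ, C.z ^ (k+1) ∈ C.P := by
    intro k
    induction k with
    | zero => simpa using C.hzpos
    | succ k ih => rw [pow_succ]; exact C.hP.1 _ ih _ C.hzpos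
  have h1 : C.z ^ m = C.z ^ (m.toNat) := by
    rw [← zpow_natCast]
    congr 1
    omega
  rw [h1]
  have h2 : m.toNat = (m.toNat - 1) + 1 := by omega
  rw [h2]
  exact key _

theorem zpow_mem_iff {m : ℤ} : C.z ^ m ∈ C.P ↔ 0 < m := by
  refine ⟨?_, C.zpow_mem⟩
  intro h
  by_contra hm
  push_neg at hm
  rcases eq_or_lt_of_le hm with he | hlt
  · rw [he, zpow_zero] at h
    exact C.hP.one_not_mem h
  · have h2 : C.z ^ (-m) ∈ C.P := C.zpow_mem (by omega)
    have h3 := C.hP.1 _ h _ h2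
    rw [← zpow_add] at h3
    simp at h3
    exact C.hP.one_not_mem h3

theorem lt_zpow_iff {i j : ℤ} : C.lt (C.z^i) (C.z^j) ↔ i < j := by
  rw [lt, coneLt, ← zpow_neg, ← zpow_add, zpow_mem_iff]
  omega

theorem le_zpow_iff {i j : ℤ} : C.le (C.z^i) (C.z^j) ↔ i ≤ j := by
  constructor
  · rintro (he | hlt)
    · by_contra hc
      push_neg at hc
      have := C.lt_zpow_iff.2 hc
      rw [he] at this
      exact C.sto.irrefl _ this
    · exact (C.lt_zpow_iff.1 hlt).le
  · intro h
    rcases eq_or_lt_of_le h with he | hlt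
    · exact Or.inl (by rw [he])
    · exact Or.inr (C.lt_zpow_iff.2 hlt)

theorem exists_fl (h : H) : ∃ q : ℤ, C.le (C.z^q) h ∧ C.lt h (C.z^(q+1)) := by
  obtain ⟨m, k, hm, hk⟩ := C.hzcof h
  obtain ⟨q, hq1, hq2⟩ := Int.exists_greatest_of_bdd (P := fun q => C.le (C.z^q) h)
    ⟨k, fun j hj => by
      have := C.lt_zpow_iff.1 (C.lt_of_le_of_lt hj hk)
      omega⟩
    ⟨m, Or.inr hm⟩
  refine ⟨q, hq1, ?_⟩
  rcases C.lt_or_le h (C.z^(q+1)) with h1 | h1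
  · exact h1
  · have := hq2 (q+1) h1
    omega

noncomputable def fl (h : H) : ℤ := Classical.choose (C.exists_fl h)

theorem fl_le (h : H) : C.le (C.z ^ C.fl h) h := (Classical.choose_spec (C.exists_fl h)).1

theorem fl_lt (h : H) : C.lt h (C.z ^ (C.fl h + 1)) := (Classical.choose_spec (C.exists_fl h)).2

theorem le_fl_iff {k : ℤ} {h : H} : k ≤ C.fl h ↔ C.le (C.z^k) h := by
  constructor
  · intro hk
    exact C.le_trans (C.le_zpow_iff.2 hk) (C.fl_le h)
  · intro hk
    have := C.lt_zpow_iff.1 (C.lt_of_le_of_lt hk (C.fl_lt h))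
    omega

theorem fl_lt_iff {k : ℤ} {h : H} : C.fl h < k ↔ C.lt h (C.z^k) := by
  constructor
  · intro hk
    exact C.lt_of_lt_of_le (C.fl_lt h) (C.le_zpow_iff.2 (by omega))
  · intro hk
    have := C.lt_zpow_iff.1 (C.lt_of_le_of_lt (C.fl_le h) hk)
    omega

theorem fl_unique {h : H} {q : ℤ} (h1 : C.le (C.z^q) h) (h2 : C.lt h (C.z^(q+1))) :
    C.fl h = q := by
  have ha := C.le_fl_iff.2 h1
  have hb := C.fl_lt_iff.2 h2
  omega

theorem fl_zpow_mul (m : ℤ) (h : H) : C.fl (C.z^m * h) = m + C.fl h := by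
  refine C.fl_unique ?_ ?_
  · rw [zpow_add]
    exact C.mul_le_iff.2 (C.fl_le h)
  · have : m + C.fl h + 1 = m + (C.fl h + 1) := by ring
    rw [this, zpow_add]
    exact C.mul_lt_iff.2 (C.fl_lt h)

theorem fl_one : C.fl 1 = 0 := by
  refine C.fl_unique (by rw [zpow_zero]; exact C.le_refl 1) ?_
  show coneLt C.P 1 (C.z ^ ((0:ℤ)+1))
  rw [coneLt]
  simpa using C.hzpos

theorem le_mul {i j : ℤ} {x y : H} (hx : C.le (C.z^i) x) (hy : C.le (C.z^j) y) :
    C.le (C.z^(i+j)) (x*y) := by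
  have h1 : C.le (x * C.z^j) (x * y) := C.mul_le_iff.2 hy
  rw [← C.zc j x] at h1
  have h2 : C.le (C.z^j * C.z^i) (C.z^j * x) := C.mul_le_iff.2 hx
  rw [← zpow_add] at h2
  have h3 := C.le_trans h2 h1
  rwa [add_comm j i] at h3

theorem lt_mul {i j : ℤ} {x y : H} (hx : C.lt x (C.z^i)) (hy : C.lt y (C.z^j)) :
    C.lt (x*y) (C.z^(i+j)) := by
  have h1 : C.lt (x * y) (x * C.z^j) := C.mul_lt_iff.2 hy
  rw [← C.zc j x] at h1
  have h2 : C.lt (C.z^j * x) (C.z^j * C.z^i) := C.mul_lt_iff.2 hx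
  rw [← zpow_add] at h2
  have h3 := C.sto.trans h1 h2
  rwa [add_comm j i] at h3

theorem one_le_mul {a b : H} (ha : C.le 1 a) (hb : C.le 1 b) : C.le 1 (a*b) := by
  have h1 : C.le (a * 1) (a * b) := C.mul_le_iff.2 hb
  rw [mul_one] at h1
  exact C.le_trans ha h1

theorem fl_mul_ge (x y : H) : C.fl x + C.fl y ≤ C.fl (x*y) :=
  C.le_fl_iff.2 (C.le_mul (C.fl_le x) (C.fl_le y))

theorem fl_mul_le (x y : H) : C.fl (x*y) ≤ C.fl x + C.fl y + 1 := by
  have h1 : C.lt (x*y) (C.z^((C.fl x + 1) + (C.fl y + 1))) := C.lt_mul (C.fl_lt x) (C.fl_lt y)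
  have h2 := C.fl_lt_iff.2 h1
  omega

noncomputable def mdl (n : ℤ) (h : H) : ℤ := C.fl h / n

noncomputable def rd (n : ℤ) (h : H) : H := C.z ^ (-(n * C.mdl n h)) * h

theorem rd_decomp (n : ℤ) (h : H) : C.z ^ (n * C.mdl n h) * C.rd n h = h := by
  rw [rd, ← mul_assoc, ← zpow_add]
  simp

theorem fl_rd (n : ℤ) (h : H) : C.fl (C.rd n h) = C.fl h - n * C.mdl n h := by
  rw [rd, fl_zpow_mul]; ring

theorem fl_rd_nonneg {n : ℤ} (hn : 0 < n) (h : H) : 0 ≤ C.fl (C.rd n h) := by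
  rw [fl_rd, mdl]
  have h1 := Int.mul_ediv_add_emod (C.fl h) n
  have h2 := Int.emod_nonneg (C.fl h) (by omega : n ≠ 0)
  omega

theorem fl_rd_lt {n : ℤ} (hn : 0 < n) (h : H) : C.fl (C.rd n h) < n := by
  rw [fl_rd, mdl]
  have h1 := Int.mul_ediv_add_emod (C.fl h) n
  have h2 := Int.emod_lt_of_pos (C.fl h) hn
  omega

theorem rd_one_le {n : ℤ} (hn : 0 < n) (h : H) : C.le 1 (C.rd n h) := by
  have h1 := C.le_fl_iff.1 (C.fl_rd_nonneg hn h)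
  rwa [zpow_zero] at h1

theorem rd_lt_zn {n : ℤ} (hn : 0 < n) (h : H) : C.lt (C.rd n h) (C.z^n) :=
  C.fl_lt_iff.1 (C.fl_rd_lt hn h)

theorem decomp_unique {n : ℤ} (hn : 0 < n) {m : ℤ} {u : H} (h : H)
    (he : h = C.z^(n*m) * u) (h1 : C.le 1 u) (h2 : C.lt u (C.z^n)) :
    C.mdl n h = m ∧ C.rd n h = u := by
  have hu0 : 0 ≤ C.fl u := by
    have h3 : C.le (C.z^(0:ℤ)) u := by rwa [zpow_zero]
    exact C.le_fl_iff.2 h3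
  have hu1 : C.fl u < n := C.fl_lt_iff.2 h2
  have hfl : C.fl h = n*m + C.fl u := by rw [he, fl_zpow_mul]
  have hm : C.mdl n h = m := by
    rw [mdl, hfl, add_comm (n*m), Int.add_mul_ediv_left _ _ (by omega : n ≠ 0),
        Int.ediv_eq_zero_of_lt hu0 hu1, zero_add]
  refine ⟨hm, ?_⟩
  rw [rd, hm, he, ← mul_assoc, ← zpow_add]
  simp

theorem mul_eq_decomp (n : ℤ) (x y : H) :
    x * y = C.z^(n*(C.mdl n x + C.mdl n y)) * (C.rd n x * C.rd n y) := by
  conv_lhs => rw [← C.rd_decomp n x, ← C.rd_decomp n y]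
  rw [mul_assoc, ← mul_assoc (C.rd n x), ← C.zc (n * C.mdl n y) (C.rd n x), mul_assoc,
    ← mul_assoc, ← zpow_add, mul_add]

theorem rd_mul_low {n : ℤ} (hn : 0 < n) {x y : H}
    (hlt : C.lt (C.rd n x * C.rd n y) (C.z^n)) :
    C.rd n (x*y) = C.rd n x * C.rd n y ∧ C.mdl n (x*y) = C.mdl n x + C.mdl n y := by
  have h := C.decomp_unique hn (x*y) (C.mul_eq_decomp n x y)
    (C.one_le_mul (C.rd_one_le hn x) (C.rd_one_le hn y)) hlt
  exact ⟨h.2, h.1⟩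

theorem rd_mul_high {n : ℤ} (hn : 0 < n) {x y : H}
    (hge : C.le (C.z^n) (C.rd n x * C.rd n y)) :
    C.rd n (x*y) = (C.z^n)⁻¹ * (C.rd n x * C.rd n y) ∧
      C.mdl n (x*y) = C.mdl n x + C.mdl n y + 1 := by
  have he : x * y = C.z^(n*(C.mdl n x + C.mdl n y + 1)) * ((C.z^n)⁻¹ * (C.rd n x * C.rd n y)) := by
    rw [C.mul_eq_decomp n x y]
    have h4 : n*(C.mdl n x + C.mdl n y + 1) = n*(C.mdl n x + C.mdl n y) + n := by ring
    rw [h4, zpow_add, mul_assoc]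
    congr 1
    rw [← mul_assoc, mul_inv_cancel, one_mul]
  have hle : C.le 1 ((C.z^n)⁻¹ * (C.rd n x * C.rd n y)) := by
    have h1 : C.le ((C.z^n)⁻¹ * C.z^n) ((C.z^n)⁻¹ * (C.rd n x * C.rd n y)) := C.mul_le_iff.2 hge
    rwa [inv_mul_cancel] at h1
  have hlt : C.lt ((C.z^n)⁻¹ * (C.rd n x * C.rd n y)) (C.z^n) := by
    have h2 : C.lt (C.rd n x * C.rd n y) (C.z^(n+n)) := C.lt_mul (C.rd_lt_zn hn x) (C.rd_lt_zn hn y)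
    have h3 : C.lt ((C.z^n)⁻¹ * (C.rd n x * C.rd n y)) ((C.z^n)⁻¹ * C.z^(n+n)) := C.mul_lt_iff.2 h2
    have h5 : (C.z^n)⁻¹ * C.z^(n+n) = C.z^n := by
      rw [← zpow_neg, ← zpow_add]
      congr 1
      ring
    rwa [h5] at h3
  have h := C.decomp_unique hn (x*y) he hle hlt
  exact ⟨h.2, h.1⟩

theorem lt_of_not_le {a b : H} (h : ¬ C.le a b) : C.lt b a := by
  rcases C.lt_or_le b a with h1 | h1
  · exact h1
  · exact absurd h1 h

def slt (n : ℤ) (x y : H) : Prop :=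
  C.lt (C.rd n x) (C.rd n y) ∨ (C.rd n x = C.rd n y ∧ C.lt x y)

theorem slt_sto (n : ℤ) : STO (C.slt n) where
  irrefl a h := by
    rcases h with h | ⟨_, h⟩
    · exact C.sto.irrefl _ h
    · exact C.sto.irrefl _ h
  trans := by
    rintro a b c (h1 | ⟨e1, h1⟩) (h2 | ⟨e2, h2⟩)
    · exact Or.inl (C.sto.trans h1 h2)
    · exact Or.inl (by rw [← e2]; exact h1)
    · exact Or.inl (by rw [e1]; exact h2)
    · exact Or.inr ⟨e1.trans e2, C.sto.trans h1 h2⟩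
  tri := by
    intro a b
    rcases C.sto.tri (C.rd n a) (C.rd n b) with e | h | h
    · rcases C.sto.tri a b with e2 | h2 | h2
      · exact Or.inl e2
      · exact Or.inr (Or.inl (Or.inr ⟨e, h2⟩))
      · exact Or.inr (Or.inr (Or.inr ⟨e.symm, h2⟩))
    · exact Or.inr (Or.inl (Or.inl h))
    · exact Or.inr (Or.inr (Or.inl h))

open Classical in
theorem eta_mul {n : ℤ} (hn : 0 < n) (a x y : H) :
    eta (C.slt n) (a*x) (a*y) = eta (C.slt n) x y
      - 2 * ((if C.le (C.z^n) (C.rd n a * C.rd n y) then (1:ℤ) else 0)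
           - (if C.le (C.z^n) (C.rd n a * C.rd n x) then (1:ℤ) else 0)) := by
  classical
  -- helper for the strict case
  have key : ∀ x y : H, C.lt (C.rd n x) (C.rd n y) →
      eta (C.slt n) (a*x) (a*y) = 1
        - 2 * ((if C.le (C.z^n) (C.rd n a * C.rd n y) then (1:ℤ) else 0)
             - (if C.le (C.z^n) (C.rd n a * C.rd n x) then (1:ℤ) else 0)) := by
    intro x y hlt
    have hmul : C.lt (C.rd n a * C.rd n x) (C.rd n a * C.rd n y) := C.mul_lt_iff.2 hlt
    by_cases hcx : C.le (C.z^n) (C.rd n a * C.rd n x)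
    · have hcy : C.le (C.z^n) (C.rd n a * C.rd n y) := C.le_trans hcx (Or.inr hmul)
      have e1 := (C.rd_mul_high hn hcx).1
      have e2 := (C.rd_mul_high hn hcy).1
      have hlt2 : C.lt (C.rd n (a*x)) (C.rd n (a*y)) := by
        rw [e1, e2]
        exact C.mul_lt_iff.2 hmul
      rw [eta_of (s := C.slt n) (Or.inl hlt2), if_pos hcx, if_pos hcy]
      ring
    · by_cases hcy : C.le (C.z^n) (C.rd n a * C.rd n y)
      · -- wrap case
        have e1 := (C.rd_mul_low hn (C.lt_of_not_le hcx)).1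
        have e2 := (C.rd_mul_high hn hcy).1
        have hlt2 : C.lt (C.rd n (a*y)) (C.rd n (a*x)) := by
          rw [e1, e2]
          have h6' : C.le (C.z^n * 1) (C.z^n * C.rd n x) := C.mul_le_iff.2 (C.rd_one_le hn x)
          rw [mul_one] at h6'
          have h6 : C.lt (C.rd n y) (C.z ^ n * C.rd n x) :=
            C.lt_of_lt_of_le (C.rd_lt_zn hn y) h6'
          have h7 : C.lt (C.rd n a * C.rd n y) (C.rd n a * (C.z ^ n * C.rd n x)) :=
            C.mul_lt_iff.2 h6
          have h8 : C.rd n a * (C.z ^ n * C.rd n x) = C.z ^ n * (C.rd n a * C.rd n x) := by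
            rw [← mul_assoc, ← C.zc n (C.rd n a), mul_assoc]
          rw [h8] at h7
          have h9 : C.lt (C.z ^ n * ((C.z^n)⁻¹ * (C.rd n a * C.rd n y)))
              (C.z ^ n * (C.rd n a * C.rd n x)) := by
            rwa [← mul_assoc, mul_inv_cancel, one_mul]
          exact C.mul_lt_iff.1 h9
        rw [eta_of_rev (s := C.slt n) (C.slt_sto n) (Or.inl hlt2), if_pos hcy, if_neg hcx]
        ring
      · have e1 := (C.rd_mul_low hn (C.lt_of_not_le hcx)).1
        have e2 := (C.rd_mul_low hn (C.lt_of_not_le hcy)).1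
        have hlt2 : C.lt (C.rd n (a*x)) (C.rd n (a*y)) := by
          rw [e1, e2]; exact hmul
        rw [eta_of (s := C.slt n) (Or.inl hlt2), if_neg hcx, if_neg hcy]
        ring
  rcases C.sto.tri (C.rd n x) (C.rd n y) with e | h | h
  · -- tie on reduced parts
    have ecar : C.rd n a * C.rd n x = C.rd n a * C.rd n y := by rw [e]
    have e1 : C.rd n (a*x) = C.rd n (a*y) := by
      by_cases hc : C.le (C.z^n) (C.rd n a * C.rd n x)
      · rw [(C.rd_mul_high hn hc).1, (C.rd_mul_high hn (ecar ▸ hc)).1, ecar]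
      · rw [(C.rd_mul_low hn (C.lt_of_not_le hc)).1,
          (C.rd_mul_low hn (C.lt_of_not_le (ecar ▸ hc))).1, ecar]
    have hiff : ∀ u v : H, C.rd n u = C.rd n v → (C.slt n u v ↔ C.lt u v) := by
      intro u v huv
      constructor
      · rintro (h1 | ⟨_, h1⟩)
        · rw [huv] at h1
          exact absurd h1 (C.sto.irrefl _)
        · exact h1
      · intro h1
        exact Or.inr ⟨huv, h1⟩
    rw [ecar]
    have goal2 : eta (C.slt n) (a*x) (a*y) = eta (C.slt n) x y := by
      rcases C.sto.tri x y with e3 | h3 | h3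
      · subst e3
        rw [eta_of_eq (C.slt_sto n) rfl, eta_of_eq (C.slt_sto n) rfl]
      · rw [eta_of (s := C.slt n) ((hiff _ _ e1).2 (C.mul_lt_iff.2 h3)),
          eta_of (s := C.slt n) ((hiff _ _ e).2 h3)]
      · rw [eta_of_rev (s := C.slt n) (C.slt_sto n) ((hiff _ _ e1.symm).2 (C.mul_lt_iff.2 h3)),
          eta_of_rev (s := C.slt n) (C.slt_sto n) ((hiff _ _ e.symm).2 h3)]
    rw [goal2]
    ring
  · rw [key x y h, eta_of (s := C.slt n) (Or.inl h)]
  · have h1 := key y x h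
    have h2 := eta_antisymm (C.slt_sto n) (a*x) (a*y)
    have h3 := eta_antisymm (C.slt_sto n) x y
    rw [eta_of (s := C.slt n) (Or.inl h)] at h3
    rw [h2, h1, h3]
    ring


end COCtx

section Main
variable {H : Type*} [Group H] {L : Type*} [Group L]

theorem circOfCone_eq_crc (Q : Set L) : circOfCone Q = crc (coneLt Q) := rfl

theorem pullback_cone (C : COCtx H) (φ : L →* H) (hinj : Function.Injective φ) :
    IsPositiveCone (φ ⁻¹' C.P) := by
  constructor
  · intro a ha b hb
    exact Set.mem_preimage.2 (by rw [map_mul]; exact C.hP.1 _ ha _ hb)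
  · ext a
    simp only [Set.mem_union, Set.mem_preimage, Set.mem_inv, Set.mem_setOf_eq, ne_eq]
    constructor
    · rintro (h | h)
      · intro he
        subst he
        rw [map_one] at h
        exact C.hP.one_not_mem h
      · intro he
        subst he
        rw [inv_one, map_one] at h
        exact C.hP.one_not_mem h
    · intro h
      have h1 : φ a ∈ C.P ∪ C.P⁻¹ := by
        rw [C.hP.2]
        simp only [Set.mem_setOf_eq, ne_eq]
        intro he
        exact h (hinj (by rw [he, map_one]))
      rcases h1 with h1 | h1
      · exact Or.inl h1
      · exact Or.inr (by rw [map_inv]; exact Set.mem_inv.1 h1)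

variable (C : COCtx H) (φ : L →* H)

/-- The pullback along `φ` of the `n`-twisted order on `H`. -/
def pb (n : ℤ) (a b : L) : Prop := C.slt n (φ a) (φ b)

theorem pb_sto (hinj : Function.Injective φ) (n : ℤ) : STO (pb C φ n) where
  irrefl a h := (C.slt_sto n).irrefl _ h
  trans h1 h2 := (C.slt_sto n).trans h1 h2
  tri a b := by
    rcases (C.slt_sto n).tri (φ a) (φ b) with e | h | h
    · exact Or.inl (hinj e)
    · exact Or.inr (Or.inl h)
    · exact Or.inr (Or.inr h)

theorem eta_pb (n : ℤ) (a b : L) : eta (pb C φ n) a b = eta (C.slt n) (φ a) (φ b) := rfl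

theorem pullcone_iff (a b : L) : coneLt (φ ⁻¹' C.P) a b ↔ C.lt (φ a) (φ b) := by
  rw [coneLt, COCtx.lt, coneLt, Set.mem_preimage, map_mul, map_inv]

theorem eta_pullcone (a b : L) :
    eta (coneLt (φ ⁻¹' C.P)) a b = eta C.lt (φ a) (φ b) := by
  classical
  unfold eta
  rw [if_congr (pullcone_iff C φ a b) rfl rfl, if_congr (pullcone_iff C φ b a) rfl rfl]

open Classical in
theorem isCircOrd_pb (hinj : Function.Injective φ) {n : ℤ} (hn : 0 < n) :
    IsCircOrd (crc (pb C φ n)) := by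
  have hs := pb_sto C φ hinj n
  refine ⟨fun a b c => crc_zero_iff hs a b c, fun a b c => crc_values _ a b c,
    fun a b c d => crc_cocycle hs a b c d, ?_⟩
  intro g a b c
  rw [crc_eq_eta hs, crc_eq_eta hs]
  have key : ∀ u v : L, eta (pb C φ n) (g*u) (g*v) = eta (pb C φ n) u v
      - 2 * ((if C.le (C.z^n) (C.rd n (φ g) * C.rd n (φ v)) then (1:ℤ) else 0)
           - (if C.le (C.z^n) (C.rd n (φ g) * C.rd n (φ u)) then (1:ℤ) else 0)) := by
    intro u v
    rw [eta_pb, eta_pb, map_mul, map_mul]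
    exact C.eta_mul hn (φ g) (φ u) (φ v)
  rw [key a b, key b c, key c a]
  ring

open Classical in
/-- For `n` large (relative to a pair), the twisted order agrees with the linear order
up to the cut correction. -/
theorem eta_slt_big (C : COCtx H) {n : ℤ} {x y : H} (hn0 : 0 < n)
    (hn : |C.fl x| + |C.fl y| + 2 ≤ n) :
    eta (C.slt n) x y = eta C.lt x y
      - 2 * ((if C.le 1 y then (1:ℤ) else 0) - (if C.le 1 x then (1:ℤ) else 0)) := by
  classical
  have habsx1 := le_abs_self (C.fl x)
  have habsx2 := neg_abs_le (C.fl x)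
  have habsy1 := le_abs_self (C.fl y)
  have habsy2 := neg_abs_le (C.fl y)
  have habsx0 := abs_nonneg (C.fl x)
  have habsy0 := abs_nonneg (C.fl y)
  have hrd_pos : ∀ w : H, C.le 1 w → |C.fl w| + 2 ≤ n → C.rd n w = w := by
    intro w hw hnn
    have hw1 := le_abs_self (C.fl w)
    have h0 : 0 ≤ C.fl w := by
      have h0' : C.le (C.z^(0:ℤ)) w := by rwa [zpow_zero]
      exact C.le_fl_iff.2 h0'
    exact (C.decomp_unique (m := 0) (u := w) hn0 w (by simp) hw
      (C.fl_lt_iff.1 (by omega))).2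
  have hrd_neg : ∀ w : H, C.lt w 1 → |C.fl w| + 2 ≤ n → C.rd n w = C.z^n * w := by
    intro w hw hnn
    have hw2 := neg_abs_le (C.fl w)
    have h0 : C.fl w < 0 := by
      have h1 : C.lt w (C.z^(0:ℤ)) := by rwa [zpow_zero]
      have := C.fl_lt_iff.2 h1
      omega
    have he : w = C.z^(n*(-1)) * (C.z^n * w) := by
      rw [← mul_assoc, ← zpow_add]
      simp
    have hfl : C.fl (C.z^n * w) = n + C.fl w := C.fl_zpow_mul n w
    refine (C.decomp_unique (m := -1) hn0 w he ?_ ?_).2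
    · have h2 : (0:ℤ) ≤ C.fl (C.z^n * w) := by omega
      have h3 := C.le_fl_iff.1 h2
      rwa [zpow_zero] at h3
    · refine C.fl_lt_iff.1 ?_
      omega
  by_cases hx : C.le 1 x <;> by_cases hy : C.le 1 y
  · -- both nonnegative
    have e1 : C.rd n x = x := hrd_pos x hx (by omega)
    have e2 : C.rd n y = y := hrd_pos y hy (by omega)
    have he : eta (C.slt n) x y = eta C.lt x y := by
      rcases C.sto.tri x y with e | h | h
      · rw [eta_of_eq (C.slt_sto n) e, eta_of_eq C.sto e]
      · rw [eta_of (s := C.slt n) (Or.inl (by rw [e1, e2]; exact h)), eta_of (s := C.lt) h]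
      · rw [eta_of_rev (s := C.slt n) (C.slt_sto n) (Or.inl (by rw [e1, e2]; exact h)),
          eta_of_rev (s := C.lt) C.sto h]
    rw [he, if_pos hx, if_pos hy]
    ring
  · -- x ≥ 1 > y : x comes before the cut, y wraps to the top
    have hy' : C.lt y 1 := C.lt_of_not_le hy
    have e1 : C.rd n x = x := hrd_pos x hx (by omega)
    have e2 : C.rd n y = C.z^n * y := hrd_neg y hy' (by omega)
    have hfx : 0 ≤ C.fl x := by
      have h0' : C.le (C.z^(0:ℤ)) x := by rwa [zpow_zero]
      exact C.le_fl_iff.2 h0'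
    have hfy : C.fl y < 0 := by
      have h1 : C.lt y (C.z^(0:ℤ)) := by rwa [zpow_zero]
      have := C.fl_lt_iff.2 h1
      omega
    have hsl : C.slt n x y := by
      refine Or.inl ?_
      rw [e1, e2]
      have h1 : C.lt x (C.z^(C.fl x + 1)) := C.fl_lt x
      have h2 : C.le (C.z^(C.fl x + 1)) (C.z^(n + C.fl y)) := C.le_zpow_iff.2 (by omega)
      have h3 : C.le (C.z^(n + C.fl y)) (C.z^n * y) := by
        rw [zpow_add]
        exact C.mul_le_iff.2 (C.fl_le y)
      exact C.lt_of_lt_of_le h1 (C.le_trans h2 h3)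
    have hlin : C.lt y x := C.lt_of_lt_of_le hy' hx
    rw [eta_of (s := C.slt n) hsl, eta_of_rev (s := C.lt) C.sto hlin, if_pos hx, if_neg hy]
    ring
  · -- y ≥ 1 > x
    have hx' := C.lt_of_not_le hx
    have e1 : C.rd n x = C.z^n * x := hrd_neg x hx' (by omega)
    have e2 : C.rd n y = y := hrd_pos y hy (by omega)
    have hfy : 0 ≤ C.fl y := by
      have h0' : C.le (C.z^(0:ℤ)) y := by rwa [zpow_zero]
      exact C.le_fl_iff.2 h0'
    have hfx : C.fl x < 0 := by
      have h1 : C.lt x (C.z^(0:ℤ)) := by rwa [zpow_zero]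
      have := C.fl_lt_iff.2 h1
      omega
    have hsl : C.slt n y x := by
      refine Or.inl ?_
      rw [e1, e2]
      have h1 : C.lt y (C.z^(C.fl y + 1)) := C.fl_lt y
      have h2 : C.le (C.z^(C.fl y + 1)) (C.z^(n + C.fl x)) := C.le_zpow_iff.2 (by omega)
      have h3 : C.le (C.z^(n + C.fl x)) (C.z^n * x) := by
        rw [zpow_add]
        exact C.mul_le_iff.2 (C.fl_le x)
      exact C.lt_of_lt_of_le h1 (C.le_trans h2 h3)
    have hlin : C.lt x y := C.lt_of_lt_of_le hx' hy
    rw [eta_of_rev (s := C.slt n) (C.slt_sto n) hsl, eta_of (s := C.lt) hlin,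
      if_neg hx, if_pos hy]
    ring
  · -- both negative
    have hx' := C.lt_of_not_le hx
    have hy' := C.lt_of_not_le hy
    have e1 : C.rd n x = C.z^n * x := hrd_neg x hx' (by omega)
    have e2 : C.rd n y = C.z^n * y := hrd_neg y hy' (by omega)
    have he : eta (C.slt n) x y = eta C.lt x y := by
      rcases C.sto.tri x y with e | h | h
      · rw [eta_of_eq (C.slt_sto n) e, eta_of_eq C.sto e]
      · rw [eta_of (s := C.slt n) (Or.inl (by rw [e1, e2]; exact C.mul_lt_iff.2 h)),
          eta_of (s := C.lt) h]
      · rw [eta_of_rev (s := C.slt n) (C.slt_sto n)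
          (Or.inl (by rw [e1, e2]; exact C.mul_lt_iff.2 h)),
          eta_of_rev (s := C.lt) C.sto h]
    rw [he, if_neg hx, if_neg hy]
    ring

/-- Pointwise convergence of the genuine family to the secret ordering. -/
theorem crc_pb_conv (hinj : Function.Injective φ) (a b c : L) : ∃ N : ℤ, ∀ n : ℤ, N ≤ n →
    crc (pb C φ n) a b c = circOfCone (φ ⁻¹' C.P) a b c := by
  classical
  refine ⟨|C.fl (φ a)| + |C.fl (φ b)| + |C.fl (φ c)| + 2, ?_⟩
  intro n hn
  have h0a := abs_nonneg (C.fl (φ a))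
  have h0b := abs_nonneg (C.fl (φ b))
  have h0c := abs_nonneg (C.fl (φ c))
  have hn0 : 0 < n := by omega
  have key : ∀ u v : L, |C.fl (φ u)| + |C.fl (φ v)| + 2 ≤ n →
      eta (pb C φ n) u v = eta (coneLt (φ ⁻¹' C.P)) u v
        - 2 * ((if C.le 1 (φ v) then (1:ℤ) else 0) - (if C.le 1 (φ u) then (1:ℤ) else 0)) := by
    intro u v h
    rw [eta_pb, eta_pullcone]
    exact eta_slt_big C hn0 h
  rw [circOfCone_eq_crc, crc_eq_eta (pb_sto C φ hinj n),
    crc_eq_eta (coneLt_sto (pullback_cone C φ hinj)),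
    key a b (by omega), key b c (by omega), key c a (by omega)]
  ring

end Main


section Genuine
variable {H : Type*} [Group H] {L : Type*} [Group L]
variable (C : COCtx H) (φ : L →* H)

theorem crc_pb_not_secret (hinj : Function.Injective φ) {g : L} (hg : C.lt C.z (φ g))
    (k : ℕ) (hk : 2 ≤ k) :
    ¬ IsSecret (crc (pb C φ (2 * C.fl (φ g ^ k)))) := by
  classical
  set T := φ g with hT
  set q := C.fl (T ^ k) with hqdef
  set n := 2 * q with hndef
  -- basic exponent facts
  have hfT : 1 ≤ C.fl T := by
    refine C.le_fl_iff.2 ?_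
    rw [zpow_one]
    exact Or.inr hg
  have hflpow : ∀ m : ℕ, (m:ℤ) * C.fl T ≤ C.fl (T^m) := by
    intro m
    induction m with
    | zero => simp [C.fl_one]
    | succ m ih =>
      rw [pow_succ]
      have h2 := C.fl_mul_ge (T^m) T
      push_cast
      push_cast at ih
      linarith
  have hq : (k:ℤ) ≤ q := by
    have h1 := hflpow k
    have h2 : (k:ℤ) * 1 ≤ (k:ℤ) * C.fl T :=
      mul_le_mul_of_nonneg_left hfT (by positivity)
    rw [mul_one] at h2
    omega
  have hq2 : 2 ≤ q := by omega
  have hn0 : (0:ℤ) < n := by omega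
  have e2k : T^(2*k) = T^k * T^k := by rw [two_mul, pow_add]
  have e4k : T^(4*k) = T^(2*k) * T^(2*k) := by
    rw [show 4*k = 2*k + 2*k by ring, pow_add]
  have hg2k : g^(2*k) = g^k * g^k := by rw [two_mul, pow_add]
  have hg4k : g^(4*k) = g^(2*k) * g^(2*k) := by
    rw [show 4*k = 2*k + 2*k by ring, pow_add]
  have hq2k_low : 2*q ≤ C.fl (T^(2*k)) := by
    rw [e2k]
    have := C.fl_mul_ge (T^k) (T^k)
    omega
  have hq2k_high : C.fl (T^(2*k)) ≤ 2*q + 1 := by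
    rw [e2k]
    have := C.fl_mul_le (T^k) (T^k)
    omega
  have hq4k_low : 2 * C.fl (T^(2*k)) ≤ C.fl (T^(4*k)) := by
    rw [e4k]
    have := C.fl_mul_ge (T^(2*k)) (T^(2*k))
    omega
  -- helper facts
  have one_le_of_fl : ∀ w : H, 0 ≤ C.fl w → C.le 1 w := by
    intro w h
    have h1 := C.le_fl_iff.1 h
    rwa [zpow_zero] at h1
  have one_lt_of_fl : ∀ w : H, 0 < C.fl w → C.lt 1 w := by
    intro w h
    have h1 : C.lt (C.z^(0:ℤ)) (C.z^(C.fl w)) := C.lt_zpow_iff.2 h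
    have h2 := C.lt_of_lt_of_le h1 (C.fl_le w)
    rwa [zpow_zero] at h2
  -- reduced representatives
  have hrd1 : C.rd n 1 = 1 := by
    refine (C.decomp_unique (m := 0) (u := 1) hn0 1 (by simp) (C.le_refl 1) ?_).2
    have h1 : C.lt (C.z^(0:ℤ)) (C.z^n) := C.lt_zpow_iff.2 (by omega)
    rwa [zpow_zero] at h1
  have hrdTk : C.rd n (T^k) = T^k := by
    refine (C.decomp_unique (m := 0) (u := T^k) hn0 _ (by simp)
      (one_le_of_fl _ (by omega)) (C.fl_lt_iff.1 (by omega))).2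
  set u2 : H := (C.z^n)⁻¹ * T^(2*k) with hu2def
  have hrdT2k : C.rd n (T^(2*k)) = u2 := by
    have hcond : C.le (C.z^n) (C.rd n (T^k) * C.rd n (T^k)) := by
      rw [hrdTk, ← e2k]
      exact C.le_fl_iff.1 (by omega)
    have h1 := (C.rd_mul_high hn0 hcond).1
    rw [hrdTk, ← e2k] at h1
    rw [e2k] at h1 ⊢
    rw [h1, hu2def, e2k]
  have hflu2 : C.fl u2 = -n + C.fl (T^(2*k)) := by
    rw [hu2def, ← zpow_neg, C.fl_zpow_mul]
  have hu2_le : C.le 1 u2 := one_le_of_fl _ (by omega)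
  have hrdT4k : C.rd n (T^(4*k)) = u2 * u2 := by
    have hcond : C.lt (C.rd n (T^(2*k)) * C.rd n (T^(2*k))) (C.z^n) := by
      rw [hrdT2k]
      refine C.fl_lt_iff.1 ?_
      have := C.fl_mul_le u2 u2
      omega
    have h1 := (C.rd_mul_low hn0 hcond).1
    rw [e4k, h1, hrdT2k]
  -- the four order comparisons in the twisted order, on the L side
  have hφk : φ (g^k) = T^k := by rw [map_pow, hT]
  have hφ2k : φ (g^(2*k)) = T^(2*k) := by rw [map_pow, hT]
  have hφ4k : φ (g^(4*k)) = T^(4*k) := by rw [map_pow, hT]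
  have hlt1Tk : C.lt 1 (T^k) := one_lt_of_fl _ (by omega)
  have hlt1T2k : C.lt 1 (T^(2*k)) := one_lt_of_fl _ (by omega)
  have hlt1T4k : C.lt 1 (T^(4*k)) := one_lt_of_fl _ (by omega)
  have s1 : pb C φ n 1 (g^k) := by
    refine Or.inl ?_
    rw [map_one, hφk, hrd1, hrdTk]
    exact hlt1Tk
  have s2 : pb C φ n (g^(2*k)) (g^k) := by
    refine Or.inl ?_
    rw [hφk, hφ2k, hrdTk, hrdT2k]
    have h1 : C.lt u2 (C.z^(C.fl u2 + 1)) := C.fl_lt u2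
    have h2 : C.le (C.z^(C.fl u2 + 1)) (C.z^q) := C.le_zpow_iff.2 (by omega)
    exact C.lt_of_lt_of_le h1 (C.le_trans h2 (C.fl_le (T^k)))
  have s3 : pb C φ n 1 (g^(2*k)) := by
    rcases hu2_le with e | hlt
    · refine Or.inr ⟨?_, ?_⟩
      · rw [map_one, hφ2k, hrd1, hrdT2k, ← e]
      · rw [map_one, hφ2k]
        exact hlt1T2k
    · refine Or.inl ?_
      rw [map_one, hφ2k, hrd1, hrdT2k]
      exact hlt
  have hu2sq_le : C.le u2 (u2 * u2) := by
    have h1 : C.le (u2 * 1) (u2 * u2) := C.mul_le_iff.2 hu2_le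
    rwa [mul_one] at h1
  have s4 : pb C φ n (g^(2*k)) (g^(4*k)) := by
    rcases hu2sq_le with e | hlt
    · refine Or.inr ⟨?_, ?_⟩
      · rw [hφ2k, hφ4k, hrdT2k, hrdT4k, ← e]
      · rw [hφ2k, hφ4k, e4k]
        have h1 : C.lt (T^(2*k) * 1) (T^(2*k) * T^(2*k)) := C.mul_lt_iff.2 hlt1T2k
        rwa [mul_one] at h1
    · refine Or.inl ?_
      rw [hφ2k, hφ4k, hrdT2k, hrdT4k]
      exact hlt
  have s5 : pb C φ n 1 (g^(4*k)) := by
    have hu4_le : C.le 1 (u2 * u2) := C.one_le_mul hu2_le hu2_le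
    rcases hu4_le with e | hlt
    · refine Or.inr ⟨?_, ?_⟩
      · rw [map_one, hφ4k, hrd1, hrdT4k, ← e]
      · rw [map_one, hφ4k]
        exact hlt1T4k
    · refine Or.inl ?_
      rw [map_one, hφ4k, hrd1, hrdT4k]
      exact hlt
  -- the two circular values
  have hspb := pb_sto C φ hinj n
  have hv1 : crc (pb C φ n) 1 (g^k) (g^(2*k)) = -1 := by
    rw [crc_eq_eta hspb, eta_of (s := pb C φ n) s1,
      eta_of_rev (s := pb C φ n) hspb s2, eta_of_rev (s := pb C φ n) hspb s3]
    ring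
  have hv2 : crc (pb C φ n) 1 (g^(2*k)) (g^(4*k)) = 1 := by
    rw [crc_eq_eta hspb, eta_of (s := pb C φ n) s3,
      eta_of (s := pb C φ n) s4, eta_of_rev (s := pb C φ n) hspb s5]
    ring
  -- suppose secret
  rintro ⟨Q, hQ, heq⟩
  have hsQ := coneLt_sto hQ
  have hxne : (1:L) ≠ g^k := by
    intro e
    have : C.lt 1 1 := by
      nth_rewrite 2 [show (1:H) = T^k from by rw [← hφk, ← e, map_one]]
      exact hlt1Tk
    exact C.sto.irrefl _ this
  have hval1 : crc (coneLt Q) 1 (g^k) (g^(2*k)) = -1 := by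
    rw [← circOfCone_eq_crc, ← heq]
    exact hv1
  have hval2 : crc (coneLt Q) 1 (g^(2*k)) (g^(4*k)) = 1 := by
    rw [← circOfCone_eq_crc, ← heq]
    exact hv2
  have hQ1x : ¬ coneLt Q 1 (g^k) := by
    intro hmem
    have hxx : coneLt Q (g^k) (g^(2*k)) := by
      rw [coneLt, hg2k, ← mul_assoc, inv_mul_cancel, one_mul]
      rw [coneLt, inv_one, one_mul] at hmem
      exact hmem
    have h1x2 : coneLt Q 1 (g^(2*k)) := hsQ.trans hmem hxx
    rw [crc_eq_eta hsQ, eta_of (s := coneLt Q) hmem, eta_of (s := coneLt Q) hxx,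
      eta_of_rev (s := coneLt Q) hsQ h1x2] at hval1
    omega
  have hQx1 : coneLt Q (g^k) 1 := by
    rcases hsQ.tri 1 (g^k) with e | h | h
    · exact absurd e hxne
    · exact absurd h hQ1x
    · exact h
  have m2 : coneLt Q (g^(2*k)) 1 := by
    rw [coneLt, mul_one, hg2k, mul_inv_rev]
    rw [coneLt, mul_one] at hQx1
    exact hQ.1 _ hQx1 _ hQx1
  have m24 : coneLt Q (g^(4*k)) (g^(2*k)) := by
    rw [coneLt, hg4k, mul_inv_rev, mul_assoc, inv_mul_cancel, mul_one]
    rw [coneLt, mul_one] at m2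
    exact m2
  have m4 : coneLt Q (g^(4*k)) 1 := by
    rw [coneLt, mul_one, hg4k, mul_inv_rev]
    rw [coneLt, mul_one] at m2
    exact hQ.1 _ m2 _ m2
  rw [crc_eq_eta hsQ, eta_of_rev (s := coneLt Q) hsQ m2,
    eta_of_rev (s := coneLt Q) hsQ m24, eta_of (s := coneLt Q) m4] at hval2
  omega

end Genuine


theorem fl_pow_ge {H : Type*} [Group H] (C : COCtx H) {T : H} (hg : C.lt C.z T) (m : ℕ) :
    (m:ℤ) ≤ C.fl (T ^ m) := by
  have hfT : 1 ≤ C.fl T := by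
    refine C.le_fl_iff.2 ?_
    rw [zpow_one]
    exact Or.inr hg
  have hflpow : ∀ j : ℕ, (j:ℤ) * C.fl T ≤ C.fl (T^j) := by
    intro j
    induction j with
    | zero => simp [C.fl_one]
    | succ j ih =>
      rw [pow_succ]
      have h2 := C.fl_mul_ge (T^j) T
      push_cast
      push_cast at ih
      linarith
  have h1 := hflpow m
  have h2 : (m:ℤ) * 1 ≤ (m:ℤ) * C.fl T :=
    mul_le_mul_of_nonneg_left hfT (by positivity)
  rw [mul_one] at h2
  omega

theorem stmt16' {H : Type*} [Group H] {L : Type*} [Group L]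
    (P : Set H) (hP : IsPositiveCone P) (z : H)
    (hzcentral : ∀ h : H, z * h = h * z) (hzpos : z ∈ P)
    (hzcofinal : ∀ h : H, ∃ m k : ℤ, coneLt P (z ^ m) h ∧ coneLt P h (z ^ k))
    (φ : L →* H) (hinj : Function.Injective φ)
    (himgcofinal : ∀ h : H, ∃ a b : L, coneLt P (φ a) h ∧ coneLt P h (φ b)) :
    ∀ csec : CircOrd L, csec.1 = circOfCone (φ ⁻¹' P) →
      ∀ U : Set (CircOrd L), IsOpen U → csec ∈ U →
        {d : CircOrd L | d ∈ U ∧ ¬ IsSecret d.1}.Infinite := by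
  intro csec hcsec U hU hcU
  set C : COCtx H := ⟨P, hP, z, hzcentral, hzpos, hzcofinal⟩ with hC
  obtain ⟨a0, g, _, hg'⟩ := himgcofinal z
  have hg : C.lt C.z (φ g) := hg'
  -- the sequence of moduli
  set Nq : ℕ → ℤ := fun j => 2 * C.fl (φ g ^ (j + 2)) with hNq
  have hNqge : ∀ j : ℕ, 2 * ((j:ℤ) + 2) ≤ Nq j := by
    intro j
    have h1 := fl_pow_ge C hg (j + 2)
    have h2 : ((j + 2 : ℕ) : ℤ) = (j:ℤ) + 2 := by push_cast; ring
    rw [h2] at h1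
    simp only [hNq]
    omega
  have hNqpos : ∀ j : ℕ, (0:ℤ) < Nq j := by
    intro j
    have := hNqge j
    have : (0:ℤ) ≤ (j:ℤ) := by positivity
    omega
  set seq : ℕ → CircOrd L :=
    fun j => ⟨crc (pb C φ (Nq j)), isCircOrd_pb C φ hinj (hNqpos j)⟩ with hseq
  have hgenuine : ∀ j : ℕ, ¬ IsSecret (seq j).1 := by
    intro j
    exact crc_pb_not_secret C φ hinj hg (j + 2) (by omega)
  have hconv : ∀ a b c : L, ∃ J : ℕ, ∀ j : ℕ, J ≤ j →
      (seq j).1 a b c = circOfCone (φ ⁻¹' P) a b c := by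
    intro a b c
    obtain ⟨N, hN⟩ := crc_pb_conv C φ hinj a b c
    refine ⟨N.toNat, fun j hj => ?_⟩
    refine hN (Nq j) ?_
    have h1 := hNqge j
    have h2 : ((N.toNat : ℕ) : ℤ) ≤ (j:ℤ) := by exact_mod_cast hj
    have h3 : N ≤ (N.toNat : ℤ) := Int.self_le_toNat N
    omega
  -- the sequence converges to csec
  have htends : Filter.Tendsto seq Filter.atTop (nhds csec) := by
    rw [Topology.IsEmbedding.subtypeVal.tendsto_nhds_iff]
    rw [tendsto_pi_nhds]
    intro a
    rw [tendsto_pi_nhds]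
    intro b
    rw [tendsto_pi_nhds]
    intro c
    obtain ⟨J, hJ⟩ := hconv a b c
    refine Filter.Tendsto.congr' ?_ tendsto_const_nhds
    refine Filter.eventually_atTop.2 ⟨J, fun j hj => ?_⟩
    show csec.1 a b c = (seq j).1 a b c
    rw [hcsec, hJ j hj]
  have hUev : ∀ᶠ j in Filter.atTop, seq j ∈ U := htends (hU.mem_nhds hcU)
  obtain ⟨K, hK⟩ := Filter.eventually_atTop.1 hUev
  by_contra hfin
  rw [Set.not_infinite] at hfin
  by_cases hall : ∀ d ∈ {d : CircOrd L | d ∈ U ∧ ¬ IsSecret d.1}, {j : ℕ | seq j = d}.Finite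
  · have hfin2 := Set.Finite.biUnion hfin hall
    have hcover : Set.Ici K ⊆ ⋃ d ∈ {d : CircOrd L | d ∈ U ∧ ¬ IsSecret d.1},
        {j : ℕ | seq j = d} := by
      intro j hj
      exact Set.mem_biUnion ⟨hK j hj, hgenuine j⟩ rfl
    exact (Set.Ici_infinite K) (hfin2.subset hcover)
  · push_neg at hall
    obtain ⟨d, hdS, hdfin⟩ := hall
    have hdeq : d = csec := by
      apply Subtype.ext
      rw [hcsec]
      funext a b c
      obtain ⟨J, hJ⟩ := hconv a b c
      obtain ⟨j, hjmem, hjge⟩ := hdfin.exists_gt J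
      have hjmem' : seq j = d := hjmem
      rw [← hjmem']
      exact hJ j (le_of_lt hjge)
    refine hdS.2 ?_
    rw [hdeq, hcsec]
    exact ⟨φ ⁻¹' P, pullback_cone C φ hinj, rfl⟩


/-- Theorem 6.2: let `(H,<)` be a left-ordered group (ordering given by the cone `P`)
with a positive cofinal central element `z`, and let `φ : L → H` be an injective
homomorphism with cofinal image.  Then the secret left-ordering `c_{<^φ}` of `L`
(associated to the pulled-back cone `φ⁻¹(P)`) is an accumulation point of `CO_g(L)`:
every open neighbourhood of it contains infinitely many genuine circular orderings. -/
theorem stmt16 {H : Type*} [Group H] {L : Type*} [Group L]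
    (P : Set H) (hP : IsPositiveCone P) (z : H)
    (hzcentral : ∀ h : H, z * h = h * z) (hzpos : z ∈ P)
    (hzcofinal : ∀ h : H, ∃ m k : ℤ, coneLt P (z ^ m) h ∧ coneLt P h (z ^ k))
    (φ : L →* H) (hinj : Function.Injective φ)
    (himgcofinal : ∀ h : H, ∃ a b : L, coneLt P (φ a) h ∧ coneLt P h (φ b)) :
    ∀ csec : CircOrd L, csec.1 = circOfCone (φ ⁻¹' P) →
      ∀ U : Set (CircOrd L), IsOpen U → csec ∈ U →
        {d : CircOrd L | d ∈ U ∧ ¬ IsSecret d.1}.Infinite := by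
  exact stmt16' P hP z hzcentral hzpos hzcofinal φ hinj himgcofinal

end Paper
end
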